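/- arXiv:2107.10486 — 2 statements merged into one kernel-verified Lean document; each statement's English description precedes it below -/
import Mathlib

section
/- Let X be a C*-correspondence over A, Y a C*-correspondence over B, M an A–B imprimitivity bimodule, and U_M : X ⊗_A M → M ⊗_B Y an A–B correspondence isomorphism. Let N = M̃ be the dual B–A imprimitivity bimodule, and let m_A : M ⊗_B N → A, x ⊗ ỹ ↦ ⟨x,y⟩_A and m_B : N ⊗_A M → B, x̃ ⊗ y ↦ ⟨x,y⟩_B be the canonical correspondence isomorphisms. Then there exists a B–A correspondence isomorphism U_N : Y ⊗_B N → N ⊗_A X such that (i_{l,X} ⊗ 1_M)(m_A ⊗ 1_{X ⊗_A M})(1_{M ⊗_B N} ⊗ U_M^{-1}) = U_M^{-1}(1_M ⊗ i_{l,Y})(1_M ⊗ m_B ⊗ 1_Y) as maps on M ⊗_B N ⊗_A M ⊗_B Y, where i_{l,X} : A ⊗_A X → X and i_{l,Y} : B ⊗_B Y → Y are the canonical isomorphisms. -/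
/-!  Common framework: C*-correspondences, tensor products, representations,
Cuntz–Pimsner algebras, and the category `ECCor`, axiomatised as structures. -/

noncomputable section

universe u

/-- The closed linear span of a subset of a topological `ℂ`-module. -/
def clspan {V : Type*} [AddCommMonoid V] [Module ℂ V] [TopologicalSpace V] (s : Set V) : Set V :=
  closure ((Submodule.span ℂ s : Submodule ℂ V) : Set V)

/-- A (nondegenerate) C*-correspondence from `A` to `B`: a right Hilbert `B`-module `X`
equipped with a left action of `A` by adjointable operators, such that `A · X` is dense. -/
structure Corr (A : Type u) (B : Type u)
    [NonUnitalCStarAlgebra A] [NonUnitalCStarAlgebra B] : Type (u + 1) where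
  /-- the underlying module -/
  X : Type u
  [nacg : NormedAddCommGroup X]
  [nsp : NormedSpace ℂ X]
  [cs : CompleteSpace X]
  /-- the `B`-valued inner product `⟨·,·⟩_B` -/
  ip : X → X → B
  /-- the right action of `B` -/
  sm : X → B → X
  /-- the left action of `A` -/
  la : A → X → X
  sm_add : ∀ (x y : X) (b : B), sm (x + y) b = sm x b + sm y b
  sm_add' : ∀ (x : X) (b c : B), sm x (b + c) = sm x b + sm x c
  sm_mul : ∀ (x : X) (b c : B), sm (sm x b) c = sm x (b * c)
  sm_smul : ∀ (z : ℂ) (x : X) (b : B), sm (z • x) b = z • sm x b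
  sm_smul' : ∀ (z : ℂ) (x : X) (b : B), sm x (z • b) = z • sm x b
  sm_bound : ∀ (x : X) (b : B), ‖sm x b‖ ≤ ‖x‖ * ‖b‖
  ip_add : ∀ (x y z : X), ip x (y + z) = ip x y + ip x z
  ip_smul : ∀ (z : ℂ) (x y : X), ip x (z • y) = z • ip x y
  ip_star : ∀ (x y : X), star (ip x y) = ip y x
  ip_sm : ∀ (x y : X) (b : B), ip x (sm y b) = ip x y * b
  ip_pos : ∀ x : X, ∃ b : B, ip x x = star b * b
  ip_norm : ∀ x : X, ‖x‖ ^ 2 = ‖ip x x‖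
  ip_bound : ∀ x y : X, ‖ip x y‖ ≤ ‖x‖ * ‖y‖
  la_add : ∀ (a : A) (x y : X), la a (x + y) = la a x + la a y
  la_smul : ∀ (a : A) (z : ℂ) (x : X), la a (z • x) = z • la a x
  la_add' : ∀ (a b : A) (x : X), la (a + b) x = la a x + la b x
  la_mul : ∀ (a b : A) (x : X), la (a * b) x = la a (la b x)
  la_smul' : ∀ (z : ℂ) (a : A) (x : X), la (z • a) x = z • la a x
  la_adj : ∀ (a : A) (x y : X), ip (la a x) y = ip x (la (star a) y)
  la_bound : ∀ (a : A) (x : X), ‖la a x‖ ≤ ‖a‖ * ‖x‖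
  la_sm : ∀ (a : A) (x : X) (b : B), la a (sm x b) = sm (la a x) b
  /-- nondegeneracy: `A · X` is dense in `X` -/
  nondeg : clspan {y : X | ∃ (a : A) (x : X), y = la a x} = Set.univ

attribute [instance] Corr.nacg Corr.nsp Corr.cs

namespace Corr

variable {A B : Type u} [NonUnitalCStarAlgebra A] [NonUnitalCStarAlgebra B]

/-- The left action, as a continuous linear operator. -/
def lmul (E : Corr A B) (a : A) : E.X →L[ℂ] E.X :=
  LinearMap.mkContinuous
    { toFun := E.la a
      map_add' := E.la_add a
      map_smul' := fun z x => E.la_smul a z x }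
    ‖a‖ (E.la_bound a)

/-- The rank-one operator `θ_{x,y} : z ↦ x · ⟨y, z⟩_B`. -/
def rankOne (E : Corr A B) (x y : E.X) : E.X →L[ℂ] E.X :=
  LinearMap.mkContinuous
    { toFun := fun z => E.sm x (E.ip y z)
      map_add' := fun u v => by
        show E.sm x (E.ip y (u + v)) = E.sm x (E.ip y u) + E.sm x (E.ip y v)
        rw [E.ip_add, E.sm_add']
      map_smul' := fun c u => by
        show E.sm x (E.ip y (c • u)) = c • E.sm x (E.ip y u)
        rw [E.ip_smul, E.sm_smul'] }
    (‖x‖ * ‖y‖)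
    (fun z => by
      calc ‖E.sm x (E.ip y z)‖ ≤ ‖x‖ * ‖E.ip y z‖ := E.sm_bound _ _
        _ ≤ ‖x‖ * (‖y‖ * ‖z‖) :=
            mul_le_mul_of_nonneg_left (E.ip_bound y z) (norm_nonneg x)
        _ = ‖x‖ * ‖y‖ * ‖z‖ := (mul_assoc _ _ _).symm)

/-- The compact operators `K(X)`: the closed linear span of the rank-one operators. -/
def compacts (E : Corr A B) : Set (E.X →L[ℂ] E.X) :=
  clspan (Set.range fun p : E.X × E.X => E.rankOne p.1 p.2)

/-- A correspondence is injective if its left action is injective. -/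
def Injective (E : Corr A B) : Prop := Function.Injective E.lmul

/-- A correspondence is regular if its left action is injective with values in the compacts. -/
def Regular (E : Corr A B) : Prop :=
  Function.Injective E.lmul ∧ ∀ a : A, E.lmul a ∈ E.compacts

/-- Katsura's ideal `J_X = φ_X⁻¹(K(X)) ∩ (ker φ_X)^⊥` of a correspondence over `A`. -/
def katsuraIdeal {A : Type u} [NonUnitalCStarAlgebra A] (E : Corr A A) : Set A :=
  {a : A | E.lmul a ∈ E.compacts ∧ ∀ b : A, E.lmul b = 0 → a * b = 0}

/-- The closed submodule `M · J` of `M` determined by a subset `J ⊆ B`. -/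
def smSet (M : Corr A B) (J : Set B) : Set M.X :=
  clspan {ξ : M.X | ∃ (m : M.X) (b : B), b ∈ J ∧ ξ = M.sm m b}

/-- A pair of operators on a correspondence which are adjoint to each other. -/
def IsAdjointPair (W : Corr A B) (T S : W.X →L[ℂ] W.X) : Prop :=
  ∀ ξ η : W.X, W.ip (T ξ) η = W.ip ξ (S η)

end Corr

/-- The condition `J_X · M ⊆ M · J_Y` on an `A–B` correspondence `M`,
relative to correspondences `X` over `A` and `Y` over `B`. -/
def KatsuraCompat {A B : Type u} [NonUnitalCStarAlgebra A] [NonUnitalCStarAlgebra B]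
    (E : Corr A A) (M : Corr A B) (F : Corr B B) : Prop :=
  ∀ a ∈ E.katsuraIdeal, ∀ m : M.X, M.la a m ∈ M.smSet F.katsuraIdeal

/-- An isomorphism of `A–B` correspondences. -/
structure CorrIso {A B : Type u} [NonUnitalCStarAlgebra A] [NonUnitalCStarAlgebra B]
    (E F : Corr A B) where
  toFun : E.X → F.X
  invFun : F.X → E.X
  left_inv : Function.LeftInverse invFun toFun
  right_inv : Function.RightInverse invFun toFun
  map_add : ∀ x y : E.X, toFun (x + y) = toFun x + toFun y
  map_smul : ∀ (c : ℂ) (x : E.X), toFun (c • x) = c • toFun x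
  map_la : ∀ (a : A) (x : E.X), toFun (E.la a x) = F.la a (toFun x)
  map_ip : ∀ x y : E.X, F.ip (toFun x) (toFun y) = E.ip x y

/-- Witness that the correspondence `T` *is* the balanced tensor product `E ⊗_B F`,
via the bilinear map `mk2 : (x, y) ↦ x ⊗ y`. -/
structure TensorData {A B C : Type u} [NonUnitalCStarAlgebra A] [NonUnitalCStarAlgebra B]
    [NonUnitalCStarAlgebra C] (E : Corr A B) (F : Corr B C) (T : Corr A C) where
  mk2 : E.X → F.X → T.X
  add_l : ∀ (x x' : E.X) (y : F.X), mk2 (x + x') y = mk2 x y + mk2 x' y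
  add_r : ∀ (x : E.X) (y y' : F.X), mk2 x (y + y') = mk2 x y + mk2 x y'
  smul_l : ∀ (c : ℂ) (x : E.X) (y : F.X), mk2 (c • x) y = c • mk2 x y
  smul_r : ∀ (c : ℂ) (x : E.X) (y : F.X), mk2 x (c • y) = c • mk2 x y
  balanced : ∀ (x : E.X) (b : B) (y : F.X), mk2 (E.sm x b) y = mk2 x (F.la b y)
  ip_mk : ∀ (x x' : E.X) (y y' : F.X),
    T.ip (mk2 x y) (mk2 x' y') = F.ip y (F.la (E.ip x x') y')
  la_mk : ∀ (a : A) (x : E.X) (y : F.X), T.la a (mk2 x y) = mk2 (E.la a x) y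
  sm_mk : ∀ (x : E.X) (y : F.X) (c : C), T.sm (mk2 x y) c = mk2 x (F.sm y c)
  dense : clspan (Set.range fun p : E.X × F.X => mk2 p.1 p.2) = Set.univ

/-- Witness that `C` is the `A–D` correspondence obtained from the C*-algebra `D`
by letting `A` act on the left through the map `ψ : A → D` (e.g. the identity
correspondence when `D = A` and `ψ = id`). -/
structure PullCorr {A D : Type u} [NonUnitalCStarAlgebra A] [NonUnitalCStarAlgebra D]
    (ψ : A → D) (C : Corr A D) where
  u : D → C.X
  bij : Function.Bijective u
  add : ∀ d d' : D, u (d + d') = u d + u d'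
  smul : ∀ (c : ℂ) (d : D), u (c • d) = c • u d
  ip : ∀ d d' : D, C.ip (u d) (u d') = star d * d'
  la : ∀ (a : A) (d : D), C.la a (u d) = u (ψ a * d)
  sm : ∀ d d' : D, C.sm (u d) d' = u (d * d')

/-- Witness that `W'` is the `C–D` correspondence obtained from the `B–D` correspondence `W`
by transferring the left action along a homomorphism `σ : C → L(W)`. -/
structure ReCorr {B C D : Type u} [NonUnitalCStarAlgebra B] [NonUnitalCStarAlgebra C]
    [NonUnitalCStarAlgebra D] (W : Corr B D) (σ : C → (W.X →L[ℂ] W.X)) (W' : Corr C D) where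
  w : W.X → W'.X
  bij : Function.Bijective w
  add : ∀ ξ η : W.X, w (ξ + η) = w ξ + w η
  smul : ∀ (c : ℂ) (ξ : W.X), w (c • ξ) = c • w ξ
  ip_eq : ∀ ξ η : W.X, W'.ip (w ξ) (w η) = W.ip ξ η
  sm_eq : ∀ (ξ : W.X) (d : D), w (W.sm ξ d) = W'.sm (w ξ) d
  la_eq : ∀ (c : C) (ξ : W.X), W'.la c (w ξ) = w (σ c ξ)

/-- The structure of an `A–B` imprimitivity bimodule on an `A–B` correspondence `M`:
a compatible left `A`-valued inner product, full on both sides. -/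
structure ImpData {A B : Type u} [NonUnitalCStarAlgebra A] [NonUnitalCStarAlgebra B]
    (M : Corr A B) where
  lip : M.X → M.X → A
  lip_add : ∀ x y z : M.X, lip (x + y) z = lip x z + lip y z
  lip_smul : ∀ (c : ℂ) (x y : M.X), lip (c • x) y = c • lip x y
  lip_star : ∀ x y : M.X, star (lip x y) = lip y x
  lip_la : ∀ (a : A) (x y : M.X), lip (M.la a x) y = a * lip x y
  lip_pos : ∀ x : M.X, ∃ a : A, lip x x = star a * a
  compat : ∀ x y z : M.X, M.la (lip x y) z = M.sm x (M.ip y z)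
  full_left : clspan {a : A | ∃ x y : M.X, a = lip x y} = Set.univ
  full_right : clspan {b : B | ∃ x y : M.X, b = M.ip x y} = Set.univ

/-- Witness that the `B–A` correspondence `N` is the dual (conjugate) imprimitivity bimodule
of the `A–B` imprimitivity bimodule `M`. -/
structure DualData {A B : Type u} [NonUnitalCStarAlgebra A] [NonUnitalCStarAlgebra B]
    (M : Corr A B) (imp : ImpData M) (N : Corr B A) where
  d : M.X → N.X
  bij : Function.Bijective d
  add : ∀ x y : M.X, d (x + y) = d x + d y
  conj_smul : ∀ (c : ℂ) (x : M.X), d (c • x) = (starRingEnd ℂ c) • d x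
  la_eq : ∀ (b : B) (x : M.X), N.la b (d x) = d (M.sm x (star b))
  sm_eq : ∀ (x : M.X) (a : A), N.sm (d x) a = d (M.la (star a) x)
  ip_eq : ∀ x y : M.X, N.ip (d x) (d y) = imp.lip x y

/-- Witness that `X` (a correspondence over `A`) is a nondegenerate subcorrespondence of
`Y` (a correspondence over `B`), via `(φ̇, ϕ)`. -/
structure SubCorr {A B : Type u} [NonUnitalCStarAlgebra A] [NonUnitalCStarAlgebra B]
    (E : Corr A A) (F : Corr B B) where
  φd : E.X → F.X
  φd_inj : Function.Injective φd
  φd_add : ∀ x y : E.X, φd (x + y) = φd x + φd y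
  φd_smul : ∀ (c : ℂ) (x : E.X), φd (c • x) = c • φd x
  ϕ : A → B
  ϕ_inj : Function.Injective ϕ
  ϕ_add : ∀ a b : A, ϕ (a + b) = ϕ a + ϕ b
  ϕ_mul : ∀ a b : A, ϕ (a * b) = ϕ a * ϕ b
  ϕ_star : ∀ a : A, ϕ (star a) = star (ϕ a)
  ϕ_smul : ∀ (c : ℂ) (a : A), ϕ (c • a) = c • ϕ a
  ϕ_nondeg : clspan {b : B | ∃ (a : A) (c : B), b = ϕ a * c} = Set.univ
  la_eq : ∀ (a : A) (x : E.X), φd (E.la a x) = F.la (ϕ a) (φd x)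
  ip_eq : ∀ x y : E.X, F.ip (φd x) (φd y) = ϕ (E.ip x y)
  dense : clspan {y : F.X | ∃ (x : E.X) (b : B), y = F.sm (φd x) b} = Set.univ

/-- A representation `(π, t)` of a correspondence `X` over `A` on a C*-algebra `D`. -/
structure CorrRep {A : Type u} [NonUnitalCStarAlgebra A] (E : Corr A A)
    (D : Type u) [NonUnitalCStarAlgebra D] where
  π : A → D
  t : E.X → D
  π_add : ∀ a b : A, π (a + b) = π a + π b
  π_mul : ∀ a b : A, π (a * b) = π a * π b
  π_star : ∀ a : A, π (star a) = star (π a)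
  π_smul : ∀ (c : ℂ) (a : A), π (c • a) = c • π a
  t_add : ∀ x y : E.X, t (x + y) = t x + t y
  t_smul : ∀ (c : ℂ) (x : E.X), t (c • x) = c • t x
  mul_t : ∀ (a : A) (x : E.X), π a * t x = t (E.la a x)
  t_mul : ∀ x y : E.X, star (t x) * t y = π (E.ip x y)

/-- Covariance of a representation on the Katsura ideal:
`π(a) = Ψ_t(φ_X(a))` for `a ∈ J_X`, expressed by simultaneous approximation of
`φ_X(a)` by finite-rank operators and of `π(a)` by the corresponding finite sums. -/
def CorrRep.Covariant {A : Type u} [NonUnitalCStarAlgebra A] {E : Corr A A}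
    {D : Type u} [NonUnitalCStarAlgebra D] (R : CorrRep E D) : Prop :=
  ∀ a ∈ E.katsuraIdeal, ∀ ε > (0 : ℝ), ∃ (k : ℕ) (x y : Fin k → E.X),
    ‖E.lmul a - ∑ i, E.rankOne (x i) (y i)‖ < ε ∧
    ‖R.π a - ∑ i, R.t (x i) * star (R.t (y i))‖ < ε

/-- The products `t(x₁)⋯t(xₙ)`, i.e. `t^n` applied to elementary tensors. -/
def CorrRep.tProd {A : Type u} [NonUnitalCStarAlgebra A] {E : Corr A A}
    {D : Type u} [NonUnitalCStarAlgebra D] (R : CorrRep E D) :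
    (n : ℕ) → (Fin (n + 1) → E.X) → D
  | 0, x => R.t (x 0)
  | (k + 1), x => R.t (x 0) * R.tProd k (fun i => x i.succ)

/-- A Cuntz–Pimsner algebra for `X`: a C*-algebra `O` with a universal injective covariant
representation of `X`, generated by the image of that representation. -/
structure CuntzPimsner {A : Type u} [NonUnitalCStarAlgebra A] (E : Corr A A) :
    Type (u + 1) where
  O : Type u
  [str : NonUnitalCStarAlgebra O]
  rep : CorrRep E O
  covariant : rep.Covariant
  injective : Function.Injective rep.π
  generates :
    Dense ((NonUnitalStarAlgebra.adjoin ℂ (Set.range rep.π ∪ Set.range rep.t) :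
      NonUnitalStarSubalgebra ℂ O) : Set O)
  universal : ∀ (D : Type u) [NonUnitalCStarAlgebra D] (R : CorrRep E D), R.Covariant →
    ∃ ρ : O → D, Continuous ρ ∧
      (∀ p q : O, ρ (p + q) = ρ p + ρ q) ∧
      (∀ (c : ℂ) (p : O), ρ (c • p) = c • ρ p) ∧
      (∀ p q : O, ρ (p * q) = ρ p * ρ q) ∧
      (∀ p : O, ρ (star p) = star (ρ p)) ∧
      (∀ a : A, ρ (rep.π a) = R.π a) ∧
      (∀ x : E.X, ρ (rep.t x) = R.t x)

attribute [instance] CuntzPimsner.str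

/-- The gauge action of the circle on a Cuntz–Pimsner algebra. -/
structure GaugeAction {A : Type u} [NonUnitalCStarAlgebra A] {E : Corr A A}
    (CP : CuntzPimsner E) where
  g : ℂ → CP.O → CP.O
  g_add : ∀ z : ℂ, ‖z‖ = 1 → ∀ S T : CP.O, g z (S + T) = g z S + g z T
  g_smul : ∀ z : ℂ, ‖z‖ = 1 → ∀ (c : ℂ) (S : CP.O), g z (c • S) = c • g z S
  g_mul : ∀ z : ℂ, ‖z‖ = 1 → ∀ S T : CP.O, g z (S * T) = g z S * g z T
  g_star : ∀ z : ℂ, ‖z‖ = 1 → ∀ S : CP.O, g z (star S) = star (g z S)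
  g_comp : ∀ z w : ℂ, ‖z‖ = 1 → ‖w‖ = 1 → ∀ S : CP.O, g (z * w) S = g z (g w S)
  g_one : ∀ S : CP.O, g 1 S = S
  g_cont : ∀ S : CP.O, Continuous fun z : {z : ℂ // ‖z‖ = 1} => g z.1 S
  g_π : ∀ z : ℂ, ‖z‖ = 1 → ∀ a : A, g z (CP.rep.π a) = CP.rep.π a
  g_t : ∀ z : ℂ, ‖z‖ = 1 → ∀ x : E.X, g z (CP.rep.t x) = z • CP.rep.t x

/-- The data of a morphism `X → Y` in the category `ECCor`: a regular `A–B` correspondence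
`M` with `J_X · M ⊆ M · J_Y`, together with a correspondence isomorphism
`U : X ⊗_A M → M ⊗_B Y`. -/
structure EMor {A B : Type u} [NonUnitalCStarAlgebra A] [NonUnitalCStarAlgebra B]
    (E : Corr A A) (F : Corr B B) : Type (u + 1) where
  M : Corr A B
  regular : M.Regular
  kat : KatsuraCompat E M F
  TXM : Corr A B
  tdXM : TensorData E M TXM
  TMY : Corr A B
  tdMY : TensorData M F TMY
  U : CorrIso TXM TMY

/-- Two morphism data `(M, U_M)` and `(M', U_{M'})` are isomorphic:
there is an isomorphism `ξ : M → M'` with `U_{M'} ∘ (1_X ⊗ ξ) = (ξ ⊗ 1_Y) ∘ U_M`. -/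
def EMorEquiv {A B : Type u} [NonUnitalCStarAlgebra A] [NonUnitalCStarAlgebra B]
    {E : Corr A A} {F : Corr B B} (m m' : EMor E F) : Prop :=
  ∃ ξ : CorrIso m.M m'.M,
  ∃ Ξ : m.TMY.X → m'.TMY.X,
    (∀ ζ η, Ξ (ζ + η) = Ξ ζ + Ξ η) ∧
    (∀ (c : ℂ) ζ, Ξ (c • ζ) = c • Ξ ζ) ∧
    Continuous Ξ ∧
    (∀ (mm : m.M.X) (y : F.X), Ξ (m.tdMY.mk2 mm y) = m'.tdMY.mk2 (ξ.toFun mm) y) ∧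
    (∀ (x : E.X) (mm : m.M.X),
      m'.U.toFun (m'.tdXM.mk2 x (ξ.toFun mm)) = Ξ (m.U.toFun (m.tdXM.mk2 x mm)))

/-- `p` is a composite of `m : X → Y` and `n : Y → Z` in `ECCor`:
`p.M = M ⊗_B N` and `U_P = (1_M ⊗ U_N)(U_M ⊗ 1_N)` modulo the canonical identifications. -/
def EIsComposite {A B C : Type u} [NonUnitalCStarAlgebra A] [NonUnitalCStarAlgebra B]
    [NonUnitalCStarAlgebra C] {E : Corr A A} {F : Corr B B} {G : Corr C C}
    (m : EMor E F) (n : EMor F G) (p : EMor E G) : Prop :=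
  ∃ td : TensorData m.M n.M p.M,
  ∃ Ξ : m.M.X → n.TMY.X → p.TMY.X,       -- m ⊗ (n ⊗ z) ↦ (m ⊗ n) ⊗ z
  ∃ Θ : m.TMY.X → n.M.X → p.TMY.X,       -- (m ⊗ y) ⊗ n ↦ m ⊗ U_N(y ⊗ n)
    (∀ mm : m.M.X, (∀ ζ η, Ξ mm (ζ + η) = Ξ mm ζ + Ξ mm η) ∧
      (∀ (c : ℂ) ζ, Ξ mm (c • ζ) = c • Ξ mm ζ) ∧ Continuous (Ξ mm)) ∧
    (∀ (mm : m.M.X) (nn : n.M.X) (z : G.X),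
      Ξ mm (n.tdMY.mk2 nn z) = p.tdMY.mk2 (td.mk2 mm nn) z) ∧
    (∀ nn : n.M.X, (∀ ζ η, Θ (ζ + η) nn = Θ ζ nn + Θ η nn) ∧
      (∀ (c : ℂ) ζ, Θ (c • ζ) nn = c • Θ ζ nn) ∧ Continuous (fun ζ => Θ ζ nn)) ∧
    (∀ (mm : m.M.X) (y : F.X) (nn : n.M.X),
      Θ (m.tdMY.mk2 mm y) nn = Ξ mm (n.U.toFun (n.tdXM.mk2 y nn))) ∧
    (∀ (x : E.X) (mm : m.M.X) (nn : n.M.X),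
      p.U.toFun (p.tdXM.mk2 x (td.mk2 mm nn)) = Θ (m.U.toFun (m.tdXM.mk2 x mm)) nn)

/-- `e` is an identity morphism on `X` in `ECCor`: `e.M` is the identity correspondence `A`
and `U_A = i_l⁻¹ ∘ i_r : X ⊗_A A → A ⊗_A X`, i.e. `i_l (U_A (x ⊗ a)) = x · a`. -/
def EIsIdentity {A : Type u} [NonUnitalCStarAlgebra A] {E : Corr A A}
    (e : EMor E E) : Prop :=
  ∃ idd : PullCorr (fun a : A => a) e.M,
  ∃ il : e.TMY.X → E.X,
    (∀ ζ η, il (ζ + η) = il ζ + il η) ∧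
    (∀ (c : ℂ) ζ, il (c • ζ) = c • il ζ) ∧
    Continuous il ∧
    Function.Injective il ∧
    (∀ (a : A) (x : E.X), il (e.tdMY.mk2 (idd.u a) x) = E.la a x) ∧
    (∀ (x : E.X) (a : A), il (e.U.toFun (e.tdXM.mk2 x (idd.u a))) = E.sm x a)

/-- A morphism in `ECCor` is an isomorphism: it has a two-sided inverse up to
isomorphism of morphism data. -/
def EIsEIso {A B : Type u} [NonUnitalCStarAlgebra A] [NonUnitalCStarAlgebra B]
    {E : Corr A A} {F : Corr B B} (m : EMor E F) : Prop :=
  ∃ (n : EMor F E) (p : EMor E E) (q : EMor F F) (e : EMor E E) (f : EMor F F),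
    EIsComposite m n p ∧ EIsIdentity e ∧ EMorEquiv p e ∧
    EIsComposite n m q ∧ EIsIdentity f ∧ EMorEquiv q f

/-- The standing data for the C-covariant representation of `X` on `K(M ⊗_B O_Y)`
associated with a morphism `[M, U_M] : X → Y` in `ECCor`:  `O_Y` regarded as a
`B–O_Y` correspondence, the tensor product `W = M ⊗_B O_Y`, the canonical map
`Λ : (M ⊗_B Y) × O_Y → W`, `(m ⊗ y, S) ↦ m ⊗ t_Y(y)S`, and the operators
`Φ(x) = (1_M ⊗ V_Y)(T(x) ⊗ 1_{O_Y})`. -/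
structure CCovSetup {A B : Type u} [NonUnitalCStarAlgebra A] [NonUnitalCStarAlgebra B]
    {E : Corr A A} {F : Corr B B} (m : EMor E F) (CPY : CuntzPimsner F) :
    Type (u + 1) where
  OYc : Corr B CPY.O
  pcY : PullCorr CPY.rep.π OYc
  W : Corr A CPY.O
  tdW : TensorData m.M OYc W
  Λ : m.TMY.X → CPY.O → W.X
  Λ_add : ∀ (S : CPY.O) (ζ η : m.TMY.X), Λ (ζ + η) S = Λ ζ S + Λ η S
  Λ_smul : ∀ (S : CPY.O) (c : ℂ) (ζ : m.TMY.X), Λ (c • ζ) S = c • Λ ζ S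
  Λ_cont : ∀ S : CPY.O, Continuous fun ζ => Λ ζ S
  Λ_mk : ∀ (mm : m.M.X) (y : F.X) (S : CPY.O),
    Λ (m.tdMY.mk2 mm y) S = tdW.mk2 mm (pcY.u (CPY.rep.t y * S))
  Φ : E.X → (W.X →L[ℂ] W.X)
  Φ_mk : ∀ (x : E.X) (mm : m.M.X) (S : CPY.O),
    Φ x (tdW.mk2 mm (pcY.u S)) = Λ (m.U.toFun (m.tdXM.mk2 x mm)) S

/-- The homomorphism `σ : O_X → K(M ⊗_B O_Y) ⊆ L(M ⊗_B O_Y)` induced by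
the C-covariant representation. -/
structure SigmaData {A B : Type u} [NonUnitalCStarAlgebra A] [NonUnitalCStarAlgebra B]
    {E : Corr A A} {F : Corr B B} {m : EMor E F} {CPY : CuntzPimsner F}
    (st : CCovSetup m CPY) (CPX : CuntzPimsner E) where
  σ : CPX.O → (st.W.X →L[ℂ] st.W.X)
  σ_add : ∀ S T : CPX.O, σ (S + T) = σ S + σ T
  σ_smul : ∀ (c : ℂ) (S : CPX.O), σ (c • S) = c • σ S
  σ_mul : ∀ S T : CPX.O, σ (S * T) = (σ S).comp (σ T)
  σ_star : ∀ S : CPX.O, st.W.IsAdjointPair (σ S) (σ (star S))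
  σ_cont : Continuous σ
  σ_t : ∀ x : E.X, σ (CPX.rep.t x) = st.Φ x
  σ_π : ∀ a : A, σ (CPX.rep.π a) = st.W.lmul a

/-- A bundled C*-correspondence over a C*-algebra. -/
structure BCorr : Type (u + 1) where
  alg : Type u
  [str : NonUnitalCStarAlgebra alg]
  cor : Corr alg alg

attribute [instance] BCorr.str

/-- Elementary strong shift equivalence through *regular* correspondences `R`, `S`:
`X ≅ R ⊗_B S` and `Y ≅ S ⊗_A R`. -/
def ElemSSERegular (E F : BCorr) : Prop :=
  ∃ (R : Corr E.alg F.alg) (S : Corr F.alg E.alg)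
    (T₁ : Corr E.alg E.alg) (_ : TensorData R S T₁)
    (T₂ : Corr F.alg F.alg) (_ : TensorData S R T₂),
    R.Regular ∧ S.Regular ∧ Nonempty (CorrIso T₁ E.cor) ∧ Nonempty (CorrIso T₂ F.cor)

/-- Strong shift equivalence (with all intermediate data regular). -/
def StrongSSERegular (E F : BCorr) : Prop :=
  ∃ (n : ℕ) (Z : Fin (n + 1) → BCorr),
    Z 0 = E ∧ Z (Fin.last n) = F ∧
    (∀ i, (Z i).cor.Regular) ∧
    ∀ i : Fin n, ElemSSERegular (Z i.castSucc) (Z i.succ)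

/-- The tower of tensor powers `X^{⊗ k}` of a correspondence `X` over `A`
(with `X^{⊗ 0} = A`), together with the "append on the right" maps
`X^{⊗ k} × X → X^{⊗ (k+1)}`. -/
structure PowerTower {A : Type u} [NonUnitalCStarAlgebra A] (E : Corr A A) :
    Type (u + 1) where
  P : ℕ → Corr A A
  zero : PullCorr (fun a : A => a) (P 0)
  step : ∀ k : ℕ, TensorData E (P k) (P (k + 1))
  app : ∀ k : ℕ, (P k).X → E.X → (P (k + 1)).X
  app_add : ∀ (k : ℕ) (y : E.X) (w w' : (P k).X), app k (w + w') y = app k w y + app k w' y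
  app_smul : ∀ (k : ℕ) (y : E.X) (c : ℂ) (w : (P k).X), app k (c • w) y = c • app k w y
  app_cont : ∀ (k : ℕ) (y : E.X), Continuous fun w => app k w y
  app_base : ∀ (a : A) (y : E.X) (b : A),
    (P 1).sm (app 0 (zero.u a) y) b = (step 0).mk2 (E.la a y) (zero.u b)
  app_step : ∀ (k : ℕ) (x : E.X) (w : (P k).X) (y : E.X),
    app (k + 1) ((step k).mk2 x w) y = (step (k + 1)).mk2 x (app k w y)

end

/-! ### Auxiliary infrastructure -/

noncomputable section AuxInfra

universe v

open scoped ComplexConjugate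

private lemma aux_sq_le {a b : ℝ} (ha : 0 ≤ a) (hb : 0 ≤ b) (h : a^2 ≤ b^2) : a ≤ b := by
  nlinarith

private lemma aux_sq_eq {a b : ℝ} (ha : 0 ≤ a) (hb : 0 ≤ b) (h : a^2 = b^2) : a = b := by
  nlinarith

section NS

variable {V W : Type*} [NormedAddCommGroup V] [NormedSpace ℂ V]
  [NormedAddCommGroup W] [NormedSpace ℂ W]

lemma subset_clspan (s : Set V) : s ⊆ clspan s :=
  fun _ hx => subset_closure (Submodule.subset_span hx)

lemma clspan_dense {s : Set V} (h : clspan s = Set.univ) :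
    Dense ((Submodule.span ℂ s : Submodule ℂ V) : Set V) := by
  rw [dense_iff_closure_eq]; exact h

lemma clspan_eq_top_coe (s : Set V) :
    clspan s = ((Submodule.span ℂ s).topologicalClosure : Set V) := by
  rw [Submodule.topologicalClosure_coe]; rfl

lemma clspan_min {s t : Set V} (h : s ⊆ clspan t) : clspan s ⊆ clspan t := by
  have h1 : Submodule.span ℂ s ≤ (Submodule.span ℂ t).topologicalClosure := by
    rw [Submodule.span_le]
    intro x hx
    rw [← clspan_eq_top_coe]
    exact h hx
  rw [clspan_eq_top_coe s, clspan_eq_top_coe t]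
  calc ((Submodule.span ℂ s).topologicalClosure : Set V)
      ⊆ ((Submodule.span ℂ t).topologicalClosure : Set V) := SetLike.coe_subset_coe.mpr
        ((Submodule.topologicalClosure_minimal _ h1 (Submodule.isClosed_topologicalClosure _)))
    _ = _ := rfl

lemma clspan_map {f : V →L[ℂ] W} {s : Set V} {t : Set W} (h : ∀ x ∈ s, f x ∈ clspan t) :
    ∀ x ∈ clspan s, f x ∈ clspan t := by
  intro x hx
  have h1 : Submodule.span ℂ s ≤
      ((Submodule.span ℂ t).topologicalClosure).comap (f : V →ₗ[ℂ] W) := by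
    rw [Submodule.span_le]
    intro y hy
    have := h y hy
    rw [clspan_eq_top_coe] at this
    exact this
  have hcl : IsClosed ((((Submodule.span ℂ t).topologicalClosure).comap
      (f : V →ₗ[ℂ] W) : Submodule ℂ V) : Set V) :=
    (Submodule.isClosed_topologicalClosure _).preimage f.continuous
  have h2 : clspan s ⊆ ((((Submodule.span ℂ t).topologicalClosure).comap
      (f : V →ₗ[ℂ] W) : Submodule ℂ V) : Set V) := by
    have h3 := closure_mono (SetLike.coe_subset_coe.mpr h1)
    rwa [hcl.closure_eq] at h3
  have h4 : f x ∈ (Submodule.span ℂ t).topologicalClosure := h2 hx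
  rw [clspan_eq_top_coe]
  exact h4

/-- Extension of a map defined on generators with a norm bound on linear combinations. -/
lemma extend_span [CompleteSpace W] {I : Type v} (ι : I → V) (g : I → W) (K : ℝ)
    (hdense : clspan (Set.range ι) = Set.univ)
    (hb : ∀ c : I →₀ ℂ, ‖c.sum fun i z => z • g i‖ ≤ K * ‖c.sum fun i z => z • ι i‖) :
    ∃ T : V →L[ℂ] W, ∀ i, T (ι i) = g i := by
  classical
  set u : (I →₀ ℂ) → V := fun c => c.sum fun i z => z • ι i with hu
  set v : (I →₀ ℂ) → W := fun c => c.sum fun i z => z • g i with hv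
  have hueq : ∀ c c' : I →₀ ℂ, u c = u c' → v c = v c' := by
    intro c c' h
    have h1 : u (c - c') = u c - u c' :=
      Finsupp.sum_sub_index (fun i b1 b2 => sub_smul b1 b2 (ι i))
    have h2 : v (c - c') = v c - v c' :=
      Finsupp.sum_sub_index (fun i b1 b2 => sub_smul b1 b2 (g i))
    have h3 : ‖v c - v c'‖ ≤ K * ‖u c - u c'‖ := by rw [← h1, ← h2]; exact hb _
    rw [h, sub_self, norm_zero, mul_zero] at h3
    exact sub_eq_zero.mp (norm_le_zero_iff.mp h3)
  have uadd : ∀ c c' : I →₀ ℂ, u (c + c') = u c + u c' := fun c c' =>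
    Finsupp.sum_add_index' (fun i => zero_smul ℂ (ι i)) (fun i b1 b2 => add_smul b1 b2 (ι i))
  have vadd : ∀ c c' : I →₀ ℂ, v (c + c') = v c + v c' := fun c c' =>
    Finsupp.sum_add_index' (fun i => zero_smul ℂ (g i)) (fun i b1 b2 => add_smul b1 b2 (g i))
  have usmul : ∀ (z : ℂ) (c : I →₀ ℂ), u (z • c) = z • u c := by
    intro z c
    show (z • c).sum (fun i w => w • ι i) = z • c.sum fun i w => w • ι i
    rw [Finsupp.sum_smul_index' (fun i => zero_smul ℂ (ι i)), Finsupp.smul_sum]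
    exact Finsupp.sum_congr fun i _ => smul_assoc z _ (ι i)
  have vsmul : ∀ (z : ℂ) (c : I →₀ ℂ), v (z • c) = z • v c := by
    intro z c
    show (z • c).sum (fun i w => w • g i) = z • c.sum fun i w => w • g i
    rw [Finsupp.sum_smul_index' (fun i => zero_smul ℂ (g i)), Finsupp.smul_sum]
    exact Finsupp.sum_congr fun i _ => smul_assoc z _ (g i)
  set S₀ : Submodule ℂ V := Submodule.span ℂ (Set.range ι) with hS₀
  have hmem : ∀ x : S₀, ∃ c : I →₀ ℂ, u c = (x : V) := fun x =>
    Finsupp.mem_span_range_iff_exists_finsupp.mp x.2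
  set pick : S₀ → (I →₀ ℂ) := fun x => (hmem x).choose with hpick
  have hpickspec : ∀ x : S₀, u (pick x) = (x : V) := fun x => (hmem x).choose_spec
  set f₀ : S₀ →ₗ[ℂ] W :=
    { toFun := fun x => v (pick x)
      map_add' := by
        intro x y
        show v (pick (x + y)) = v (pick x) + v (pick y)
        have : u (pick (x + y)) = u (pick x + pick y) := by
          rw [uadd, hpickspec, hpickspec, hpickspec]; rfl
        rw [hueq _ _ this, vadd]
      map_smul' := by
        intro z x
        show v (pick (z • x)) = z • v (pick x)
        have : u (pick (z • x)) = u (z • pick x) := by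
          rw [usmul, hpickspec, hpickspec]; rfl
        rw [hueq _ _ this, vsmul] } with hf₀
  have hf₀b : ∀ x : S₀, ‖f₀ x‖ ≤ K * ‖x‖ := by
    intro x
    have h5 : ‖v (pick x)‖ ≤ K * ‖u (pick x)‖ := hb (pick x)
    rw [hpickspec] at h5
    exact h5
  set F₀ : S₀ →L[ℂ] W := f₀.mkContinuous K hf₀b with hF₀
  have hdr : DenseRange (S₀.subtypeL) := by
    have : Set.range (S₀.subtypeL) = (S₀ : Set V) := Subtype.range_coe
    rw [DenseRange, this]
    have := clspan_dense hdense
    exact this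
  have hui : IsUniformInducing (S₀.subtypeL) := isometry_subtype_coe.isUniformInducing
  refine ⟨F₀.extend S₀.subtypeL, fun i => ?_⟩
  have hme : ι i ∈ S₀ := Submodule.subset_span (Set.mem_range_self i)
  have h1 : (F₀.extend S₀.subtypeL) (S₀.subtypeL ⟨ι i, hme⟩) = F₀ ⟨ι i, hme⟩ :=
    ContinuousLinearMap.extend_eq _ hdr hui _
  have h2 : S₀.subtypeL ⟨ι i, hme⟩ = ι i := rfl
  rw [h2] at h1
  rw [h1]
  have h3 : u (pick ⟨ι i, hme⟩) = u (Finsupp.single i 1) := by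
    rw [hpickspec]
    show (ι i : V) = (Finsupp.single i 1).sum fun i w => w • ι i
    rw [Finsupp.sum_single_index (zero_smul ℂ (ι i)), one_smul]
  have h4 : F₀ ⟨ι i, hme⟩ = v (Finsupp.single i 1) := hueq _ _ h3
  rw [h4]
  show (Finsupp.single i 1).sum (fun i w => w • g i) = g i
  rw [Finsupp.sum_single_index (zero_smul ℂ (g i)), one_smul]

end NS

end AuxInfra
section CorrAux

universe w

open scoped ComplexConjugate

variable {C D : Type w} [NonUnitalCStarAlgebra C] [NonUnitalCStarAlgebra D]

namespace Corr

variable (W : Corr C D)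

lemma ip_zero_right (x : W.X) : W.ip x 0 = 0 := by
  have h := W.ip_add x 0 0
  rw [add_zero] at h
  exact (left_eq_add.mp h)

lemma ip_zero_left (x : W.X) : W.ip 0 x = 0 := by
  rw [← W.ip_star, W.ip_zero_right, star_zero]

lemma ip_add_left (x y z : W.X) : W.ip (x + y) z = W.ip x z + W.ip y z := by
  rw [← W.ip_star, W.ip_add, star_add, W.ip_star, W.ip_star]

lemma ip_smul_left (z : ℂ) (x y : W.X) :
    W.ip (z • x) y = (starRingEnd ℂ) z • W.ip x y := by
  rw [← W.ip_star, W.ip_smul, star_smul, W.ip_star]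
  rfl

lemma ip_sm_left (x y : W.X) (b : D) : W.ip (W.sm x b) y = star b * W.ip x y := by
  rw [← W.ip_star, W.ip_sm, star_mul, W.ip_star]

lemma sm_zero_right (x : W.X) : W.sm x 0 = 0 := by
  have h := W.sm_add' x 0 0
  rw [add_zero] at h
  exact (left_eq_add.mp h)

lemma sm_zero_left (b : D) : W.sm 0 b = 0 := by
  have h := W.sm_add 0 0 b
  rw [add_zero] at h
  exact (left_eq_add.mp h)

lemma la_zero_right (a : C) : W.la a 0 = 0 := by
  have h := W.la_add a 0 0
  rw [add_zero] at h
  exact (left_eq_add.mp h)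

lemma norm_eq_norm_of_ip {x y : W.X} (h : W.ip x x = W.ip y y) : ‖x‖ = ‖y‖ := by
  have h1 := W.ip_norm x
  have h2 := W.ip_norm y
  exact aux_sq_eq (norm_nonneg x) (norm_nonneg y) (by rw [h1, h2, h])

/-- `y ↦ ⟨x, y⟩` as a continuous linear map. -/
def ipCLM (x : W.X) : W.X →L[ℂ] D :=
  LinearMap.mkContinuous
    { toFun := W.ip x
      map_add' := W.ip_add x
      map_smul' := fun z y => W.ip_smul z x y } ‖x‖ (fun y => W.ip_bound x y)

@[simp] lemma ipCLM_apply (x y : W.X) : W.ipCLM x y = W.ip x y := rfl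

/-- `x ↦ ⟨x, y⟩` as a continuous conjugate-linear map. -/
def ipSL (y : W.X) : W.X →SL[starRingEnd ℂ] D :=
  LinearMap.mkContinuous
    { toFun := fun x => W.ip x y
      map_add' := fun x x' => W.ip_add_left x x' y
      map_smul' := fun z x => W.ip_smul_left z x y } ‖y‖
      (fun x => by rw [mul_comm]; exact W.ip_bound x y)

@[simp] lemma ipSL_apply (x y : W.X) : W.ipSL y x = W.ip x y := rfl

/-- `x ↦ x · b` as a continuous linear map. -/
def smCLM (b : D) : W.X →L[ℂ] W.X :=
  LinearMap.mkContinuous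
    { toFun := fun x => W.sm x b
      map_add' := fun x y => W.sm_add x y b
      map_smul' := fun z x => W.sm_smul z x b } ‖b‖
      (fun x => by rw [mul_comm]; exact W.sm_bound x b)

@[simp] lemma smCLM_apply (b : D) (x : W.X) : W.smCLM b x = W.sm x b := rfl

/-- `b ↦ x · b` as a continuous linear map. -/
def smCLM' (x : W.X) : D →L[ℂ] W.X :=
  LinearMap.mkContinuous
    { toFun := fun b => W.sm x b
      map_add' := fun b c => W.sm_add' x b c
      map_smul' := fun z b => W.sm_smul' z x b } ‖x‖ (fun b => W.sm_bound x b)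

@[simp] lemma smCLM'_apply (x : W.X) (b : D) : W.smCLM' x b = W.sm x b := rfl

/-- `a ↦ a · x` as a continuous linear map. -/
def laCLM' (x : W.X) : C →L[ℂ] W.X :=
  LinearMap.mkContinuous
    { toFun := fun a => W.la a x
      map_add' := fun a b => W.la_add' a b x
      map_smul' := fun z a => W.la_smul' z a x } ‖x‖
      (fun a => by rw [mul_comm]; exact W.la_bound a x)

@[simp] lemma laCLM'_apply (x : W.X) (a : C) : W.laCLM' x a = W.la a x := rfl

@[simp] lemma lmul_apply (a : C) (x : W.X) : W.lmul a x = W.la a x := rfl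

end Corr

/-- Two continuous (semi)linear maps agreeing on a closed-span-total set agree everywhere. -/
lemma ext_clspan {V U : Type*} [NormedAddCommGroup V] [NormedSpace ℂ V]
    [NormedAddCommGroup U] [NormedSpace ℂ U] {σ : ℂ →+* ℂ} (f g : V →SL[σ] U)
    {S : Set V} (hd : clspan S = Set.univ) (h : ∀ s ∈ S, f s = g s) : ∀ x, f x = g x := by
  have := ContinuousLinearMap.ext_on (clspan_dense hd) (fun s hs => h s hs)
  intro x; rw [this]

namespace TensorData

variable {C' : Type w} [NonUnitalCStarAlgebra C']
variable {E : Corr C C'} {F : Corr C' D} {T : Corr C D} (td : TensorData E F T)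

lemma mk2_norm_le (x : E.X) (y : F.X) : ‖td.mk2 x y‖ ≤ ‖x‖ * ‖y‖ := by
  have h := T.ip_norm (td.mk2 x y)
  rw [td.ip_mk] at h
  have h1 : ‖F.ip y (F.la (E.ip x x) y)‖ ≤ ‖y‖ * (‖E.ip x x‖ * ‖y‖) := by
    calc ‖F.ip y (F.la (E.ip x x) y)‖ ≤ ‖y‖ * ‖F.la (E.ip x x) y‖ := F.ip_bound _ _
      _ ≤ ‖y‖ * (‖E.ip x x‖ * ‖y‖) := by
          apply mul_le_mul_of_nonneg_left (F.la_bound _ _) (norm_nonneg y)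
  have h2 : ‖E.ip x x‖ ≤ ‖x‖ * ‖x‖ := E.ip_bound x x
  refine aux_sq_le (norm_nonneg _) (mul_nonneg (norm_nonneg x) (norm_nonneg y)) ?_
  rw [h]
  calc ‖F.ip y (F.la (E.ip x x) y)‖ ≤ ‖y‖ * (‖E.ip x x‖ * ‖y‖) := h1
    _ ≤ ‖y‖ * ((‖x‖ * ‖x‖) * ‖y‖) := by gcongr
    _ = (‖x‖ * ‖y‖)^2 := by ring

/-- `x ↦ x ⊗ y` as a continuous linear map. -/
def mk2CLM₁ (y : F.X) : E.X →L[ℂ] T.X :=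
  LinearMap.mkContinuous
    { toFun := fun x => td.mk2 x y
      map_add' := fun x x' => td.add_l x x' y
      map_smul' := fun z x => td.smul_l z x y } ‖y‖
      (fun x => by rw [mul_comm]; exact td.mk2_norm_le x y)

@[simp] lemma mk2CLM₁_apply (y : F.X) (x : E.X) : td.mk2CLM₁ y x = td.mk2 x y := rfl

/-- `y ↦ x ⊗ y` as a continuous linear map. -/
def mk2CLM₂ (x : E.X) : F.X →L[ℂ] T.X :=
  LinearMap.mkContinuous
    { toFun := fun y => td.mk2 x y
      map_add' := fun y y' => td.add_r x y y'
      map_smul' := fun z y => td.smul_r z x y } ‖x‖ (fun y => td.mk2_norm_le x y)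

@[simp] lemma mk2CLM₂_apply (x : E.X) (y : F.X) : td.mk2CLM₂ x y = td.mk2 x y := rfl

end TensorData

namespace CorrIso

variable {P Q : Corr C D} (iso : CorrIso P Q)

lemma norm_toFun (x : P.X) : ‖iso.toFun x‖ = ‖x‖ :=
  aux_sq_eq (norm_nonneg _) (norm_nonneg _) (by rw [Q.ip_norm, P.ip_norm, iso.map_ip])

lemma toFun_injective : Function.Injective iso.toFun :=
  Function.LeftInverse.injective iso.left_inv

lemma invFun_add (x y : Q.X) : iso.invFun (x + y) = iso.invFun x + iso.invFun y := by
  apply iso.toFun_injective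
  rw [iso.map_add, iso.right_inv, iso.right_inv, iso.right_inv]

lemma invFun_smul (c : ℂ) (x : Q.X) : iso.invFun (c • x) = c • iso.invFun x := by
  apply iso.toFun_injective
  rw [iso.map_smul, iso.right_inv, iso.right_inv]

lemma invFun_la (a : C) (x : Q.X) : iso.invFun (Q.la a x) = P.la a (iso.invFun x) := by
  apply iso.toFun_injective
  rw [iso.map_la, iso.right_inv, iso.right_inv]

lemma invFun_ip (x y : Q.X) : P.ip (iso.invFun x) (iso.invFun y) = Q.ip x y := by
  rw [← iso.map_ip, iso.right_inv, iso.right_inv]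

lemma norm_invFun (x : Q.X) : ‖iso.invFun x‖ = ‖x‖ := by
  rw [← iso.norm_toFun (iso.invFun x), iso.right_inv]

/-- The forward map as a continuous linear map. -/
def toCLM : P.X →L[ℂ] Q.X :=
  LinearMap.mkContinuous
    { toFun := iso.toFun
      map_add' := iso.map_add
      map_smul' := iso.map_smul } 1
      (fun x => by show ‖iso.toFun x‖ ≤ 1 * ‖x‖; rw [iso.norm_toFun, one_mul])

@[simp] lemma toCLM_apply (x : P.X) : iso.toCLM x = iso.toFun x := rfl

/-- The inverse map as a continuous linear map. -/
def invCLM : Q.X →L[ℂ] P.X :=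
  LinearMap.mkContinuous
    { toFun := iso.invFun
      map_add' := iso.invFun_add
      map_smul' := iso.invFun_smul } 1
      (fun x => by show ‖iso.invFun x‖ ≤ 1 * ‖x‖; rw [iso.norm_invFun, one_mul])

@[simp] lemma invCLM_apply (x : Q.X) : iso.invCLM x = iso.invFun x := rfl

end CorrIso

end CorrAux
section CorrAux2

universe w

variable {C D : Type w} [NonUnitalCStarAlgebra C] [NonUnitalCStarAlgebra D]

/-- `⟨a·x, b·y⟩ = ⟨x, (a*b)·y⟩`. -/
lemma Corr.ip_la_la (W : Corr C D) (a b : C) (x y : W.X) :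
    W.ip (W.la a x) (W.la b y) = W.ip x (W.la (star a * b) y) := by
  rw [W.la_adj, ← W.la_mul]

end CorrAux2
section Master

universe w v

open scoped ComplexConjugate

/-- Finite linear combination of a family. -/
private def acomb {V : Type*} [AddCommMonoid V] [Module ℂ V] {I : Type v}
    (w : I → V) (c : I →₀ ℂ) : V := c.sum fun i z => z • w i

private lemma acomb_zero {V : Type*} [AddCommMonoid V] [Module ℂ V] {I : Type v}
    (w : I → V) : acomb w 0 = 0 := Finsupp.sum_zero_index

private lemma acomb_add {V : Type*} [AddCommMonoid V] [Module ℂ V] {I : Type v}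
    (w : I → V) (c c' : I →₀ ℂ) : acomb w (c + c') = acomb w c + acomb w c' :=
  Finsupp.sum_add_index' (fun i => zero_smul ℂ (w i)) (fun i b1 b2 => add_smul b1 b2 (w i))

private lemma acomb_single {V : Type*} [AddCommMonoid V] [Module ℂ V] {I : Type v}
    (w : I → V) (i : I) (z : ℂ) : acomb w (Finsupp.single i z) = z • w i := by
  unfold acomb
  rw [Finsupp.sum_single_index (zero_smul ℂ (w i))]

variable {C D C' D' : Type w} [NonUnitalCStarAlgebra C] [NonUnitalCStarAlgebra D]
  [NonUnitalCStarAlgebra C'] [NonUnitalCStarAlgebra D']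

/-- Master extension lemma: a generator-level map with an inner-product compatibility
relation extends to a continuous linear map. -/
lemma corr_extend (P : Corr C D) (Q : Corr C' D') {I : Type v} (ι : I → P.X) (g : I → Q.X)
    (hdense : clspan (Set.range ι) = Set.univ)
    (Φ : D → D') (Φadd : ∀ a b, Φ (a + b) = Φ a + Φ b)
    (Φsmul : ∀ (z : ℂ) a, Φ (z • a) = z • Φ a)
    (CΦ : ℝ) (hCΦ : 0 ≤ CΦ) (Φbound : ∀ d, ‖Φ d‖ ≤ CΦ * ‖d‖)
    (S : P.X →L[ℂ] P.X)
    (pair : ∀ i j, Q.ip (g i) (g j) = Φ (P.ip (ι i) (S (ι j)))) :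
    ∃ T : P.X →L[ℂ] Q.X, ∀ i, T (ι i) = g i := by
  classical
  have Φzero : Φ 0 = 0 := by
    have h := Φadd 0 0
    rw [add_zero] at h
    exact (left_eq_add.mp h)
  have key : ∀ c c' : I →₀ ℂ,
      Q.ip (acomb g c) (acomb g c') = Φ (P.ip (acomb ι c) (S (acomb ι c'))) := by
    have inner : ∀ (i : I) (c' : I →₀ ℂ),
        Q.ip (g i) (acomb g c') = Φ (P.ip (ι i) (S (acomb ι c'))) := by
      intro i c'
      induction c' using Finsupp.induction_linear with
      | zero =>
        rw [acomb_zero, acomb_zero, Q.ip_zero_right, map_zero, P.ip_zero_right, Φzero]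
      | add f f' hf hf' =>
        rw [acomb_add, acomb_add, Q.ip_add, map_add, P.ip_add, Φadd, hf, hf']
      | single j z =>
        rw [acomb_single, acomb_single, Q.ip_smul, map_smul, P.ip_smul, Φsmul, pair]
    intro c c'
    induction c using Finsupp.induction_linear with
    | zero =>
      rw [acomb_zero, acomb_zero, Q.ip_zero_left, P.ip_zero_left, Φzero]
    | add f f' hf hf' =>
      rw [acomb_add, acomb_add, Q.ip_add_left, P.ip_add_left, Φadd, hf, hf']
    | single i z =>
      rw [acomb_single, acomb_single, Q.ip_smul_left, P.ip_smul_left, Φsmul, inner]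
  have hb : ∀ c : I →₀ ℂ,
      ‖c.sum fun i z => z • g i‖ ≤ Real.sqrt (CΦ * ‖S‖) * ‖c.sum fun i z => z • ι i‖ := by
    intro c
    have hsq : ‖acomb g c‖^2 ≤ (Real.sqrt (CΦ * ‖S‖) * ‖acomb ι c‖)^2 := by
      calc ‖acomb g c‖^2 = ‖Q.ip (acomb g c) (acomb g c)‖ := Q.ip_norm _
        _ = ‖Φ (P.ip (acomb ι c) (S (acomb ι c)))‖ := by rw [key]
        _ ≤ CΦ * ‖P.ip (acomb ι c) (S (acomb ι c))‖ := Φbound _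
        _ ≤ CΦ * (‖acomb ι c‖ * ‖S (acomb ι c)‖) :=
            mul_le_mul_of_nonneg_left (P.ip_bound _ _) hCΦ
        _ ≤ CΦ * (‖acomb ι c‖ * (‖S‖ * ‖acomb ι c‖)) :=
            mul_le_mul_of_nonneg_left
              (mul_le_mul_of_nonneg_left (S.le_opNorm _) (norm_nonneg _)) hCΦ
        _ = (Real.sqrt (CΦ * ‖S‖) * ‖acomb ι c‖)^2 := by
            rw [mul_pow, Real.sq_sqrt (mul_nonneg hCΦ (norm_nonneg S))]
            ring
    exact aux_sq_le (norm_nonneg _)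
      (mul_nonneg (Real.sqrt_nonneg _) (norm_nonneg _)) hsq
  exact extend_span ι g (Real.sqrt (CΦ * ‖S‖)) hdense hb

end Master
section RightDense

universe w

variable {C D : Type w} [NonUnitalCStarAlgebra C] [NonUnitalCStarAlgebra D]

namespace Corr

lemma ip_sub_right (W : Corr C D) (x y z : W.X) :
    W.ip x (y - z) = W.ip x y - W.ip x z := by
  have h := W.ip_add x (y - z) z
  rw [sub_add_cancel] at h
  rw [eq_sub_iff_add_eq, ← h]

lemma ip_sub_left (W : Corr C D) (x y z : W.X) :
    W.ip (x - y) z = W.ip x z - W.ip y z := by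
  rw [← W.ip_star, W.ip_sub_right, star_sub, W.ip_star, W.ip_star]

set_option maxHeartbeats 1000000 in
/-- Approximation `x ≈ x · c` by elements of `X · D`. -/
lemma approx_sm (W : Corr C D) (x : W.X) {ε : ℝ} (hε : 0 < ε) :
    ∃ c : D, ‖x - W.sm x c‖ < ε := by
  classical
  -- choose n
  obtain ⟨n, hn⟩ := exists_nat_gt ((1 / (2 * ε ^ 2)) ^ 2 + 1)
  have hn1 : (1:ℝ) ≤ (n:ℝ) := by nlinarith [sq_nonneg (1 / (2 * ε ^ 2))]
  have hn0 : (0:ℝ) ≤ (n:ℝ) := by linarith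
  set s : ℝ := Real.sqrt n with hs
  have hssq : s ^ 2 = (n:ℝ) := Real.sq_sqrt hn0
  have hs1 : 1 ≤ s := by nlinarith [Real.sqrt_nonneg (n:ℝ)]
  have hs0 : 0 < s := by linarith
  have hkey : 1 / (2 * s) < ε ^ 2 := by
    rw [div_lt_iff₀ (by positivity)]
    -- 1 < ε^2 * (2 * s) ⟸ s > 1/(2 ε²)
    have h2 : (1 / (2 * ε ^ 2)) < s := by
      nlinarith [Real.sqrt_nonneg (n:ℝ), sq_nonneg (s - 1 / (2 * ε ^ 2))]
    rw [div_lt_iff₀ (by positivity)] at h2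
    nlinarith
  set b : D := W.ip x x with hbdef
  have hb_sa : IsSelfAdjoint b := W.ip_star x x
  set f : ℝ → ℝ := fun t => (n:ℝ) * t ^ 2 / (1 + (n:ℝ) * t ^ 2) with hfdef
  have hden : ∀ t : ℝ, 0 < 1 + (n:ℝ) * t ^ 2 := fun t => by positivity
  have hfc : Continuous f := by
    apply Continuous.div
    · fun_prop
    · fun_prop
    · exact fun t => ne_of_gt (hden t)
  have hf0 : f 0 = 0 := by simp [hfdef]
  set c : D := cfcₙ f b with hcdef
  have hc_sa : IsSelfAdjoint c := cfcₙ_predicate f b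
  refine ⟨c, ?_⟩
  -- inner product expansion
  have hexp : W.ip (x - W.sm x c) (x - W.sm x c)
      = b - b * c - c * b + c * (b * c) := by
    rw [W.ip_sub_left, W.ip_sub_right, W.ip_sub_right]
    rw [W.ip_sm, W.ip_sm_left, W.ip_sm_left, W.ip_sm]
    rw [hc_sa.star_eq, ← hbdef]
    abel
  -- identify with cfcₙ
  set gfun : ℝ → ℝ := fun t => t * (1 - f t) ^ 2 with hgdef
  have hgeq : gfun = fun t => (t - t * f t) - (f t * t - f t * (t * f t)) := by
    funext t; simp only [hgdef]; ring
  have hid : ContinuousOn (id : ℝ → ℝ) (quasispectrum ℝ b) := continuousOn_id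
  have hfon : ContinuousOn f (quasispectrum ℝ b) := hfc.continuousOn
  have hcfc : cfcₙ gfun b = b - b * c - c * b + c * (b * c) := by
    rw [hgeq]
    rw [cfcₙ_sub _ _ b (by exact (continuous_id.sub (continuous_id.mul hfc)).continuousOn)
      (by simp [hf0])
      (by exact ((hfc.mul continuous_id).sub (hfc.mul (continuous_id.mul hfc))).continuousOn)
      (by simp [hf0])]
    rw [cfcₙ_sub _ _ b (by exact continuous_id.continuousOn) (by simp)
      (by exact (continuous_id.mul hfc).continuousOn) (by simp [hf0])]
    rw [cfcₙ_sub _ _ b (by exact (hfc.mul continuous_id).continuousOn) (by simp [hf0])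
      (by exact (hfc.mul (continuous_id.mul hfc)).continuousOn) (by simp [hf0])]
    rw [cfcₙ_mul _ _ b (by exact continuous_id.continuousOn) (by simp)
      (by exact hfc.continuousOn) (by simp [hf0])]
    rw [cfcₙ_mul _ _ b (by exact hfc.continuousOn) (by simp [hf0])
      (by exact continuous_id.continuousOn) (by simp)]
    rw [cfcₙ_mul _ _ b (by exact hfc.continuousOn) (by simp [hf0])
      (by exact (continuous_id.mul hfc).continuousOn) (by simp [hf0])]
    rw [cfcₙ_mul _ _ b (by exact continuous_id.continuousOn) (by simp)
      (by exact hfc.continuousOn) (by simp [hf0])]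
    rw [cfcₙ_id' ℝ b hb_sa, ← hcdef]
    abel
  -- sup-norm bound
  have hbound : ∀ t : ℝ, ‖gfun t‖ ≤ 1 / (2 * s) := by
    intro t
    have h1f : 1 - f t = 1 / (1 + (n:ℝ) * t ^ 2) := by
      rw [hfdef]
      field_simp
      ring
    rw [Real.norm_eq_abs, hgdef]
    have habs : |t * (1 - f t) ^ 2| = |t| * (1 - f t) ^ 2 := by
      rw [abs_mul, abs_of_nonneg (sq_nonneg (1 - f t))]
    rw [habs, h1f, div_pow, one_pow, mul_one_div]
    rw [div_le_div_iff₀ (by positivity) (by positivity)]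
    have h3 : s * |t| * s * |t| = (n:ℝ) * t ^ 2 := by
      have : |t| * |t| = t ^ 2 := by rw [← sq_abs]; ring
      nlinarith [this, hssq]
    nlinarith [sq_nonneg (s * |t| - 1), h3, mul_nonneg hn0 (sq_nonneg t), abs_nonneg t]
  have hnorm : ‖x - W.sm x c‖ ^ 2 ≤ 1 / (2 * s) := by
    rw [W.ip_norm, hexp, ← hcfc]
    exact norm_cfcₙ_le (fun t _ => hbound t)
  nlinarith [norm_nonneg (x - W.sm x c), hnorm, hkey, hε]

/-- `X · D` is dense in `X`. -/
lemma right_dense (W : Corr C D) :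
    clspan {ξ : W.X | ∃ (x : W.X) (b : D), ξ = W.sm x b} = Set.univ := by
  rw [Set.eq_univ_iff_forall]
  intro x
  have : x ∈ closure ((Submodule.span ℂ
      {ξ : W.X | ∃ (y : W.X) (b : D), ξ = W.sm y b} : Submodule ℂ W.X) : Set W.X) := by
    rw [Metric.mem_closure_iff]
    intro ε hε
    obtain ⟨c, hc⟩ := W.approx_sm x hε
    refine ⟨W.sm x c, ?_, ?_⟩
    · exact Submodule.subset_span ⟨x, c, rfl⟩
    · rw [dist_eq_norm]; exact hc
  exact this

end Corr

end RightDense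


noncomputable section

universe u

/-- Given correspondences `X` over `A` and `Y` over `B`, an `A–B`
imprimitivity bimodule `M` with an isomorphism `U_M : X ⊗_A M → M ⊗_B Y`, its dual
`N = M̃`, and the canonical isomorphisms `m_A : M ⊗_B N → A`, `m_B : N ⊗_A M → B`,
there is a `B–A` correspondence isomorphism `U_N : Y ⊗_B N → N ⊗_A X` such that
`(i_{l,X} ⊗ 1_M)(m_A ⊗ 1_{X⊗M})(1_{M⊗N} ⊗ U_M⁻¹) = U_M⁻¹(1_M ⊗ i_{l,Y})(1_M ⊗ m_B ⊗ 1_Y)`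
as maps on `M ⊗_B N ⊗_A M ⊗_B Y` (expressed on elementary tensors
`ξ ⊗ n ⊗ μ ⊗ y`, on which both sides are given by the displayed formulas). -/
theorem dual_inverse_exists
    (A B : Type u) [NonUnitalCStarAlgebra A] [NonUnitalCStarAlgebra B]
    (E : Corr A A) (F : Corr B B)
    (M : Corr A B) (imp : ImpData M)
    (N : Corr B A) (dual : DualData M imp N)
    -- the tensor products X ⊗_A M and M ⊗_B Y, and the isomorphism U_M
    (TXM : Corr A B) (tdXM : TensorData E M TXM)
    (TMY : Corr A B) (tdMY : TensorData M F TMY)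
    (UM : CorrIso TXM TMY)
    -- the tensor products M ⊗_B N and N ⊗_A M
    (TMN : Corr A A) (tdMN : TensorData M N TMN)
    (TNM : Corr B B) (tdNM : TensorData N M TNM)
    -- the canonical isomorphism m_A : M ⊗_B N → A, x ⊗ ỹ ↦ ⟨x, y⟩_A
    (mA : TMN.X → A)
    (mA_add : ∀ ζ η, mA (ζ + η) = mA ζ + mA η)
    (mA_smul : ∀ (c : ℂ) ζ, mA (c • ζ) = c • mA ζ)
    (mA_cont : Continuous mA)
    (mA_bij : Function.Bijective mA)
    (mA_mk : ∀ x y : M.X, mA (tdMN.mk2 x (dual.d y)) = imp.lip x y)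
    -- the canonical isomorphism m_B : N ⊗_A M → B, x̃ ⊗ y ↦ ⟨x, y⟩_B
    (mB : TNM.X → B)
    (mB_add : ∀ ζ η, mB (ζ + η) = mB ζ + mB η)
    (mB_smul : ∀ (c : ℂ) ζ, mB (c • ζ) = c • mB ζ)
    (mB_cont : Continuous mB)
    (mB_bij : Function.Bijective mB)
    (mB_mk : ∀ x y : M.X, mB (tdNM.mk2 (dual.d x) y) = M.ip x y)
    -- the tensor products Y ⊗_B N and N ⊗_A X
    (TYN : Corr B A) (tdYN : TensorData F N TYN)
    (TNX : Corr B A) (tdNX : TensorData N E TNX) :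
    ∃ _UN : CorrIso TYN TNX,
      ∀ (ξ : M.X) (n : N.X) (μ : M.X) (y : F.X),
        TXM.la (mA (tdMN.mk2 ξ n)) (UM.invFun (tdMY.mk2 μ y))
          = UM.invFun (tdMY.mk2 (M.sm ξ (mB (tdNM.mk2 n μ))) y) := by
  classical
  -- the commuting-square property (independent of U_N)
  have hprop : ∀ (ξ : M.X) (n : N.X) (μ : M.X) (y : F.X),
      TXM.la (mA (tdMN.mk2 ξ n)) (UM.invFun (tdMY.mk2 μ y))
        = UM.invFun (tdMY.mk2 (M.sm ξ (mB (tdNM.mk2 n μ))) y) := by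
    intro ξ n μ y
    obtain ⟨w, rfl⟩ := dual.bij.2 n
    rw [mA_mk, mB_mk, ← imp.compat, ← tdMY.la_mk, UM.invFun_la]
  -- basic translation lemmas
  have lip_eq : ∀ u v : M.X, imp.lip u v = N.ip (dual.d u) (dual.d v) :=
    fun u v => (dual.ip_eq u v).symm
  have d_sm : ∀ (w : M.X) (b : B), dual.d (M.sm w b) = N.la (star b) (dual.d w) := by
    intro w b
    rw [dual.la_eq, star_star]
  -- the CORE algebraic identity
  have core : ∀ (μ₁ μ₂ n₁ n₂ : M.X) (c : A),
      star (imp.lip μ₁ n₁) * c * imp.lip μ₂ n₂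
        = N.ip (dual.d n₁) (N.la (M.ip μ₁ (M.la c μ₂)) (dual.d n₂)) := by
    intro μ₁ μ₂ n₁ n₂ c
    calc star (imp.lip μ₁ n₁) * c * imp.lip μ₂ n₂
        = N.ip (dual.d n₁) (dual.d μ₁) * c * N.ip (dual.d μ₂) (dual.d n₂) := by
          rw [imp.lip_star, lip_eq, lip_eq]
      _ = N.ip (dual.d n₁) (N.sm (N.sm (dual.d μ₁) c) (N.ip (dual.d μ₂) (dual.d n₂))) := by
          rw [← N.ip_sm, ← N.ip_sm]
      _ = N.ip (dual.d n₁) (N.la (M.ip μ₁ (M.la c μ₂)) (dual.d n₂)) := by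
          rw [dual.sm_eq, ← lip_eq, dual.sm_eq, imp.lip_star, imp.compat, d_sm,
            ← M.ip_star, M.la_adj, star_star, star_star]
  -- compat in inner-product form
  have ipcompat : ∀ (u v w z : M.X),
      M.ip u (M.la (imp.lip v w) z) = M.ip u v * M.ip w z := by
    intro u v w z
    rw [imp.compat, M.ip_sm]
  -- construction of the operators P m : X ⊗ M → X
  have hPm : ∀ m : M.X, ∃ Pm : TXM.X →L[ℂ] E.X,
      ∀ (x : E.X) (μ' : M.X), Pm (tdXM.mk2 x μ') = E.sm x (imp.lip μ' m) := by
    intro m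
    obtain ⟨T, hT⟩ := corr_extend TXM E (fun p : E.X × M.X => tdXM.mk2 p.1 p.2)
      (fun p => E.sm p.1 (imp.lip p.2 m)) tdXM.dense
      (fun b => N.ip (dual.d m) (N.la b (dual.d m)))
      (fun a b => by
        show N.ip (dual.d m) (N.la (a + b) (dual.d m)) = _
        rw [N.la_add', N.ip_add])
      (fun z a => by
        show N.ip (dual.d m) (N.la (z • a) (dual.d m)) = _
        rw [N.la_smul', N.ip_smul])
      (‖dual.d m‖ * ‖dual.d m‖) (mul_nonneg (norm_nonneg _) (norm_nonneg _))
      (fun b => by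
        calc ‖N.ip (dual.d m) (N.la b (dual.d m))‖
            ≤ ‖dual.d m‖ * ‖N.la b (dual.d m)‖ := N.ip_bound _ _
          _ ≤ ‖dual.d m‖ * (‖b‖ * ‖dual.d m‖) :=
              mul_le_mul_of_nonneg_left (N.la_bound _ _) (norm_nonneg _)
          _ = ‖dual.d m‖ * ‖dual.d m‖ * ‖b‖ := by ring)
      (ContinuousLinearMap.id ℂ TXM.X)
      (fun p q => by
        show E.ip (E.sm p.1 (imp.lip p.2 m)) (E.sm q.1 (imp.lip q.2 m))
          = N.ip (dual.d m) (N.la (TXM.ip (tdXM.mk2 p.1 p.2)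
              ((ContinuousLinearMap.id ℂ TXM.X) (tdXM.mk2 q.1 q.2))) (dual.d m))
        simp only [ContinuousLinearMap.id_apply]
        rw [tdXM.ip_mk, E.ip_sm_left, E.ip_sm, ← mul_assoc, core])
    exact ⟨T, fun x μ' => hT (x, μ')⟩
  choose P hP using hPm
  -- construction of the operators Q m : M ⊗ Y → Y
  have hQm : ∀ m : M.X, ∃ Qm : TMY.X →L[ℂ] F.X,
      ∀ (m'' : M.X) (y : F.X), Qm (tdMY.mk2 m'' y) = F.la (M.ip m m'') y := by
    intro m
    obtain ⟨T, hT⟩ := corr_extend TMY F (fun p : M.X × F.X => tdMY.mk2 p.1 p.2)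
      (fun p => F.la (M.ip m p.1) p.2) tdMY.dense
      (fun b => b) (fun a b => rfl) (fun z a => rfl) 1 zero_le_one
      (fun d => by exact le_of_eq (one_mul _).symm)
      (TMY.lmul (imp.lip m m))
      (fun p q => by
        show F.ip (F.la (M.ip m p.1) p.2) (F.la (M.ip m q.1) q.2)
          = TMY.ip (tdMY.mk2 p.1 p.2) (TMY.lmul (imp.lip m m) (tdMY.mk2 q.1 q.2))
        rw [Corr.lmul_apply, tdMY.la_mk, tdMY.ip_mk, F.ip_la_la, M.ip_star,
          ← M.ip_sm, ← imp.compat])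
    exact ⟨T, fun m'' y => hT (m'', y)⟩
  choose Q hQ using hQm
  -- extended identity for P
  have star_id : ∀ (a : A) (n₁ n₂ : M.X) (ζ η : TXM.X),
      E.ip (P n₁ ζ) (E.la a (P n₂ η))
        = N.ip (dual.d n₁) (N.la (TXM.ip ζ (TXM.la a η)) (dual.d n₂)) := by
    intro a n₁ n₂
    have elem : ∀ p q : E.X × M.X,
        E.ip (P n₁ (tdXM.mk2 p.1 p.2)) (E.la a (P n₂ (tdXM.mk2 q.1 q.2)))
          = N.ip (dual.d n₁)
              (N.la (TXM.ip (tdXM.mk2 p.1 p.2) (TXM.la a (tdXM.mk2 q.1 q.2))) (dual.d n₂)) := by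
      intro p q
      rw [hP, hP, tdXM.la_mk, tdXM.ip_mk, E.la_sm, E.ip_sm_left, E.ip_sm, ← mul_assoc, core]
    have step1 : ∀ (p : E.X × M.X) (η : TXM.X),
        E.ip (P n₁ (tdXM.mk2 p.1 p.2)) (E.la a (P n₂ η))
          = N.ip (dual.d n₁) (N.la (TXM.ip (tdXM.mk2 p.1 p.2) (TXM.la a η)) (dual.d n₂)) := by
      intro p
      have h := ext_clspan
        ((E.ipCLM (P n₁ (tdXM.mk2 p.1 p.2))).comp ((E.lmul a).comp (P n₂)))
        ((N.ipCLM (dual.d n₁)).comp ((N.laCLM' (dual.d n₂)).comp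
          ((TXM.ipCLM (tdXM.mk2 p.1 p.2)).comp (TXM.lmul a))))
        tdXM.dense ?_
      · intro η
        simpa using h η
      · rintro s ⟨q, rfl⟩
        simpa using elem p q
    intro ζ η
    have h := ext_clspan
      ((E.ipSL (E.la a (P n₂ η))).comp (P n₁))
      ((N.ipCLM (dual.d n₁)).comp ((N.laCLM' (dual.d n₂)).comp (TXM.ipSL (TXM.la a η))))
      tdXM.dense ?_
    · simpa using h ζ
    · rintro s ⟨p, rfl⟩
      simpa using step1 p η
  -- extended identity for Q
  have qelem : ∀ (m₁ m₂ : M.X) (p q : M.X × F.X),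
      F.ip (Q m₁ (tdMY.mk2 p.1 p.2)) (Q m₂ (tdMY.mk2 q.1 q.2))
        = TMY.ip (tdMY.mk2 p.1 p.2) (TMY.la (imp.lip m₁ m₂) (tdMY.mk2 q.1 q.2)) := by
    intro m₁ m₂ p q
    rw [hQ, hQ, tdMY.la_mk, tdMY.ip_mk, F.ip_la_la, M.ip_star, ← M.ip_sm, ← imp.compat]
  have qq : ∀ (m₁ m₂ : M.X) (η η' : TMY.X),
      F.ip (Q m₁ η) (Q m₂ η') = TMY.ip η (TMY.la (imp.lip m₁ m₂) η') := by
    intro m₁ m₂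
    have step1 : ∀ (p : M.X × F.X) (η' : TMY.X),
        F.ip (Q m₁ (tdMY.mk2 p.1 p.2)) (Q m₂ η')
          = TMY.ip (tdMY.mk2 p.1 p.2) (TMY.la (imp.lip m₁ m₂) η') := by
      intro p
      have h := ext_clspan
        ((F.ipCLM (Q m₁ (tdMY.mk2 p.1 p.2))).comp (Q m₂))
        ((TMY.ipCLM (tdMY.mk2 p.1 p.2)).comp (TMY.lmul (imp.lip m₁ m₂)))
        tdMY.dense ?_
      · intro η'; simpa using h η'
      · rintro s ⟨q, rfl⟩; simpa using qelem m₁ m₂ p q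
    intro η η'
    have h := ext_clspan
      ((F.ipSL (Q m₂ η')).comp (Q m₁))
      ((TMY.ipSL (TMY.la (imp.lip m₁ m₂) η')))
      tdMY.dense ?_
    · simpa using h η
    · rintro s ⟨p, rfl⟩; simpa using step1 p η'
  -- generators for Y ⊗ N and the map U_N
  set ι₁ : M.X × M.X × F.X × M.X → TYN.X :=
    fun i => tdYN.mk2 (F.la (M.ip i.1 i.2.1) i.2.2.1) (dual.d i.2.2.2) with hι₁
  set g₁ : M.X × M.X × F.X × M.X → TNX.X :=
    fun i => tdNX.mk2 (dual.d i.1) (P i.2.2.2 (UM.invCLM (tdMY.mk2 i.2.1 i.2.2.1))) with hg₁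
  have hd1 : clspan (Set.range ι₁) = Set.univ := by
    have h1 : ∀ (y : F.X) (n : N.X), tdYN.mk2 y n ∈ clspan (Set.range ι₁) := by
      intro y n
      obtain ⟨m, rfl⟩ := dual.bij.2 n
      have hy : y ∈ clspan {w : F.X | ∃ (b : B) (y' : F.X), w = F.la b y'} := by
        rw [F.nondeg]; trivial
      have hmap := clspan_map (f := tdYN.mk2CLM₁ (dual.d m)) (t := Set.range ι₁)
        ?_ y hy
      · simpa using hmap
      · rintro w ⟨b, y', rfl⟩
        have hb : b ∈ clspan {c : B | ∃ u v : M.X, c = M.ip u v} := by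
          rw [imp.full_right]; trivial
        have hmap2 := clspan_map
          (f := (tdYN.mk2CLM₁ (dual.d m)).comp (F.laCLM' y')) (t := Set.range ι₁)
          ?_ b hb
        · simpa using hmap2
        · rintro c ⟨u, v, rfl⟩
          have : (tdYN.mk2CLM₁ (dual.d m)).comp (F.laCLM' y') (M.ip u v)
              = ι₁ (u, v, y', m) := by simp [hι₁]
          rw [this]
          exact subset_clspan _ (Set.mem_range_self _)
    apply Set.eq_univ_of_univ_subset
    rw [← tdYN.dense]
    apply clspan_min
    rintro z ⟨p, rfl⟩
    exact h1 p.1 p.2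
  -- the pair identity for F₁
  have pair1 : ∀ i j, TNX.ip (g₁ i) (g₁ j) = TYN.ip (ι₁ i) (ι₁ j) := by
    rintro ⟨m₁, μ₁, y₁, n₁⟩ ⟨m₂, μ₂, y₂, n₂⟩
    simp only [hι₁, hg₁]
    rw [tdNX.ip_mk, ← lip_eq, star_id, tdYN.ip_mk]
    congr 1
    rw [CorrIso.invCLM_apply, CorrIso.invCLM_apply, ← UM.invFun_la, UM.invFun_ip,
      tdMY.la_mk, tdMY.ip_mk, F.ip_la_la, M.ip_star]
    congr 2
    rw [ipcompat, ← M.ip_sm, ← imp.compat]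
  obtain ⟨F₁, hF₁⟩ := corr_extend TYN TNX ι₁ g₁ hd1 (fun a => a) (fun a b => rfl)
    (fun z a => rfl) 1 zero_le_one (fun d => le_of_eq (one_mul _).symm)
    (ContinuousLinearMap.id ℂ TYN.X)
    (fun i j => by simpa using pair1 i j)
  -- generators for N ⊗ X and the map U_N⁻¹
  set ι₂ : M.X × E.X × M.X × M.X → TNX.X :=
    fun i => tdNX.mk2 (dual.d i.1) (E.sm i.2.1 (imp.lip i.2.2.1 i.2.2.2)) with hι₂
  set g₂ : M.X × E.X × M.X × M.X → TYN.X :=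
    fun i => tdYN.mk2 (Q i.1 (UM.toCLM (tdXM.mk2 i.2.1 i.2.2.1))) (dual.d i.2.2.2) with hg₂
  have hd2 : clspan (Set.range ι₂) = Set.univ := by
    have h1 : ∀ (ζ : TNX.X) (a : A), TNX.sm ζ a ∈ clspan (Set.range ι₂) := by
      intro ζ a
      have hz : ζ ∈ clspan (Set.range fun p : N.X × E.X => tdNX.mk2 p.1 p.2) := by
        rw [tdNX.dense]; trivial
      have hmap := clspan_map (f := TNX.smCLM a) (t := Set.range ι₂) ?_ ζ hz
      · simpa using hmap
      · rintro w ⟨p, rfl⟩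
        obtain ⟨m, hm⟩ := dual.bij.2 p.1
        have ha : a ∈ clspan {c : A | ∃ u v : M.X, c = imp.lip u v} := by
          rw [imp.full_left]; trivial
        have hmap2 := clspan_map (f := TNX.smCLM' (tdNX.mk2 p.1 p.2))
          (t := Set.range ι₂) ?_ a ha
        · simpa using hmap2
        · rintro c ⟨u, v, rfl⟩
          have he : TNX.smCLM' (tdNX.mk2 p.1 p.2) (imp.lip u v) = ι₂ (m, p.2, u, v) := by
            simp only [Corr.smCLM'_apply, hι₂, ← hm]
            rw [tdNX.sm_mk]
          rw [he]
          exact subset_clspan _ (Set.mem_range_self _)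
    apply Set.eq_univ_of_univ_subset
    rw [← TNX.right_dense]
    apply clspan_min
    rintro z ⟨x, b, rfl⟩
    exact h1 x b
  have pair2 : ∀ i j, TYN.ip (g₂ i) (g₂ j) = TNX.ip (ι₂ i) (ι₂ j) := by
    rintro ⟨m₁, x₁, μ₁, ν₁⟩ ⟨m₂, x₂, μ₂, ν₂⟩
    simp only [hι₂, hg₂]
    rw [tdYN.ip_mk, qq, tdNX.ip_mk, ← lip_eq]
    rw [CorrIso.toCLM_apply, CorrIso.toCLM_apply, ← UM.map_la, UM.map_ip,
      tdXM.la_mk, tdXM.ip_mk]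
    rw [← core]
    rw [E.la_sm, E.ip_sm_left, E.ip_sm, ← mul_assoc]
  obtain ⟨F₂, hF₂⟩ := corr_extend TNX TYN ι₂ g₂ hd2 (fun a => a) (fun a b => rfl)
    (fun z a => rfl) 1 zero_le_one (fun d => le_of_eq (one_mul _).symm)
    (ContinuousLinearMap.id ℂ TNX.X)
    (fun i j => by simpa using pair2 i j)
  -- the two transfer identities
  have L1 : ∀ (m' m : M.X) (ζ : TXM.X),
      F₂ (tdNX.mk2 (dual.d m') (P m ζ)) = tdYN.mk2 (Q m' (UM.toCLM ζ)) (dual.d m) := by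
    intro m' m
    have h := ext_clspan
      (F₂.comp ((tdNX.mk2CLM₂ (dual.d m')).comp (P m)))
      ((tdYN.mk2CLM₁ (dual.d m)).comp ((Q m').comp UM.toCLM))
      tdXM.dense ?_
    · intro ζ; simpa using h ζ
    · rintro s ⟨p, rfl⟩
      simp only [ContinuousLinearMap.comp_apply, TensorData.mk2CLM₂_apply,
        TensorData.mk2CLM₁_apply]
      rw [hP]
      have he : tdNX.mk2 (dual.d m') (E.sm p.1 (imp.lip p.2 m)) = ι₂ (m', p.1, p.2, m) := by
        simp [hι₂]
      rw [he, hF₂]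
  have L2 : ∀ (m ν : M.X) (η : TMY.X),
      F₁ (tdYN.mk2 (Q m η) (dual.d ν)) = tdNX.mk2 (dual.d m) (P ν (UM.invCLM η)) := by
    intro m ν
    have h := ext_clspan
      (F₁.comp ((tdYN.mk2CLM₁ (dual.d ν)).comp (Q m)))
      ((tdNX.mk2CLM₂ (dual.d m)).comp ((P ν).comp UM.invCLM))
      tdMY.dense ?_
    · intro η; simpa using h η
    · rintro s ⟨p, rfl⟩
      simp only [ContinuousLinearMap.comp_apply, TensorData.mk2CLM₂_apply,
        TensorData.mk2CLM₁_apply]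
      rw [hQ]
      have he : tdYN.mk2 (F.la (M.ip m p.1) p.2) (dual.d ν) = ι₁ (m, p.1, p.2, ν) := by
        simp [hι₁]
      rw [he, hF₁]
  -- F₂ ∘ F₁ = id and F₁ ∘ F₂ = id
  have linv : ∀ ζ : TYN.X, F₂ (F₁ ζ) = ζ := by
    have h := ext_clspan (F₂.comp F₁) (ContinuousLinearMap.id ℂ TYN.X) hd1 ?_
    · intro ζ; simpa using h ζ
    · rintro s ⟨⟨m₁, μ₁, y₁, n₁⟩, rfl⟩
      simp only [ContinuousLinearMap.comp_apply, ContinuousLinearMap.id_apply]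
      rw [hF₁]
      simp only [hg₁]
      rw [L1]
      rw [CorrIso.toCLM_apply, CorrIso.invCLM_apply,
        show UM.toFun (UM.invFun (tdMY.mk2 μ₁ y₁)) = tdMY.mk2 μ₁ y₁ from UM.right_inv _, hQ]
  have rinv : ∀ ζ : TNX.X, F₁ (F₂ ζ) = ζ := by
    have h := ext_clspan (F₁.comp F₂) (ContinuousLinearMap.id ℂ TNX.X) hd2 ?_
    · intro ζ; simpa using h ζ
    · rintro s ⟨⟨m₁, x₁, μ₁, ν₁⟩, rfl⟩
      simp only [ContinuousLinearMap.comp_apply, ContinuousLinearMap.id_apply]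
      rw [hF₂]
      simp only [hg₂]
      rw [L2]
      rw [CorrIso.invCLM_apply, CorrIso.toCLM_apply,
        show UM.invFun (UM.toFun (tdXM.mk2 x₁ μ₁)) = tdXM.mk2 x₁ μ₁ from UM.left_inv _, hP]
  -- F₁ intertwines the left actions
  have mapla : ∀ (b : B) (ζ : TYN.X), F₁ (TYN.la b ζ) = TNX.la b (F₁ ζ) := by
    intro b
    have h := ext_clspan (F₁.comp (TYN.lmul b)) ((TNX.lmul b).comp F₁) hd1 ?_
    · intro ζ; simpa using h ζ
    · rintro s ⟨⟨m₁, μ₁, y₁, n₁⟩, rfl⟩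
      simp only [ContinuousLinearMap.comp_apply, Corr.lmul_apply]
      have e1 : TYN.la b (ι₁ (m₁, μ₁, y₁, n₁)) = ι₁ (M.sm m₁ (star b), μ₁, y₁, n₁) := by
        simp only [hι₁]
        rw [tdYN.la_mk, ← F.la_mul]
        congr 2
        rw [M.ip_sm_left, star_star]
      rw [e1, hF₁, hF₁]
      simp only [hg₁]
      rw [d_sm, star_star, tdNX.la_mk]
  -- F₁ preserves inner products
  have mapip : ∀ ζ η : TYN.X, TNX.ip (F₁ ζ) (F₁ η) = TYN.ip ζ η := by
    have step1 : ∀ i (η : TYN.X), TNX.ip (F₁ (ι₁ i)) (F₁ η) = TYN.ip (ι₁ i) η := by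
      intro i
      have h := ext_clspan ((TNX.ipCLM (F₁ (ι₁ i))).comp F₁) (TYN.ipCLM (ι₁ i)) hd1 ?_
      · intro η; simpa using h η
      · rintro s ⟨j, rfl⟩
        simp only [ContinuousLinearMap.comp_apply, Corr.ipCLM_apply]
        rw [hF₁, hF₁, pair1]
    intro ζ η
    have h := ext_clspan ((TNX.ipSL (F₁ η)).comp F₁) (TYN.ipSL η) hd1 ?_
    · simpa using h ζ
    · rintro s ⟨i, rfl⟩
      simp only [ContinuousLinearMap.comp_apply, Corr.ipSL_apply]
      exact step1 i η
  refine ⟨?_, hprop⟩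
  exact
    { toFun := F₁
      invFun := F₂
      left_inv := linv
      right_inv := rinv
      map_add := fun x y => F₁.map_add x y
      map_smul := fun c x => F₁.map_smul c x
      map_la := mapla
      map_ip := mapip }





end
end

section
/- Let X be a C*-correspondence over A with universal covariant representation (Υ, t) generating the Cuntz-Pimsner algebra O_X. Then the map from X ⊗_A O_X to the closed subspace cl span{t(x)S : x ∈ X, S ∈ O_X} of O_X determined on elementary tensors by x ⊗ S ↦ t(x)S is an isomorphism of A–O_X correspondences. -/
noncomputable section

universe u


namespace CorrAux

variable {A B : Type u} [NonUnitalCStarAlgebra A] [NonUnitalCStarAlgebra B] (E : Corr A B)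

lemma ip_add_left (x y z : E.X) : E.ip (x + y) z = E.ip x z + E.ip y z := by
  rw [← E.ip_star, E.ip_add, star_add, E.ip_star, E.ip_star]

lemma ip_smul_left (c : ℂ) (x y : E.X) :
    E.ip (c • x) y = (starRingEnd ℂ c) • E.ip x y := by
  rw [← E.ip_star, E.ip_smul, star_smul, E.ip_star]
  rfl

lemma ip_zero_left (y : E.X) : E.ip 0 y = 0 := by
  have h := ip_add_left E 0 0 y
  rw [add_zero] at h
  exact right_eq_add.mp h

lemma ip_zero_right (y : E.X) : E.ip y 0 = 0 := by
  have h := E.ip_add y 0 0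
  rw [add_zero] at h
  exact right_eq_add.mp h

lemma la_zero (a : A) : E.la a 0 = 0 := by
  have h := E.la_add a 0 0
  rw [add_zero] at h
  exact right_eq_add.mp h

lemma sm_zero_left (b : B) : E.sm 0 b = 0 := by
  have h := E.sm_add 0 0 b
  rw [add_zero] at h
  exact right_eq_add.mp h

/-- `η ↦ E.ip ζ η` as a continuous linear map. -/
def ipR (ζ : E.X) : E.X →L[ℂ] B :=
  LinearMap.mkContinuous
    { toFun := E.ip ζ
      map_add' := E.ip_add ζ
      map_smul' := fun c x => E.ip_smul c ζ x }
    ‖ζ‖ (fun x => E.ip_bound ζ x)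

lemma continuous_ip_right (ζ : E.X) : Continuous fun η => E.ip ζ η :=
  (ipR E ζ).continuous

lemma continuous_ip_left (η : E.X) : Continuous fun ζ => E.ip ζ η := by
  have : (fun ζ => E.ip ζ η) = fun ζ => star (E.ip η ζ) := by
    funext ζ; rw [E.ip_star]
  rw [this]
  exact continuous_star.comp (continuous_ip_right E η)

lemma continuous_la (a : A) : Continuous (E.la a) :=
  (E.lmul a).continuous

/-- `x ↦ E.sm x b` as a continuous linear map. -/
def smL (b : B) : E.X →L[ℂ] E.X :=
  LinearMap.mkContinuous
    { toFun := fun x => E.sm x b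
      map_add' := fun x y => E.sm_add x y b
      map_smul' := fun c x => E.sm_smul c x b }
    ‖b‖ (fun x => by rw [mul_comm]; exact E.sm_bound x b)

lemma continuous_sm_left (b : B) : Continuous fun x => E.sm x b :=
  (smL E b).continuous

end CorrAux

/-- For a correspondence `X` over `A` with universal covariant
representation `(Υ, t)` generating `O_X`, the map determined by `x ⊗ S ↦ t(x)S`
is an isomorphism of `A–O_X` correspondences from `X ⊗_A O_X` onto the closed
subspace `cl span { t(x)S : x ∈ X, S ∈ O_X }` of `O_X`. -/
theorem tensor_with_OX_iso_onto_tX_OX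
    (A : Type u) [NonUnitalCStarAlgebra A] (E : Corr A A)
    (CP : CuntzPimsner E)
    -- O_X as an A–O_X correspondence via Υ and right multiplication
    (OXc : Corr A CP.O) (pc : PullCorr CP.rep.π OXc)
    -- the tensor product X ⊗_A O_X
    (TT : Corr A CP.O) (td : TensorData E OXc TT) :
    ∃ Φ : TT.X → CP.O,
      (∀ ζ η : TT.X, Φ (ζ + η) = Φ ζ + Φ η) ∧
      (∀ (c : ℂ) (ζ : TT.X), Φ (c • ζ) = c • Φ ζ) ∧
      (∀ ζ η : TT.X, star (Φ ζ) * Φ η = TT.ip ζ η) ∧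
      (∀ (a : A) (ζ : TT.X), Φ (TT.la a ζ) = CP.rep.π a * Φ ζ) ∧
      (∀ (ζ : TT.X) (S : CP.O), Φ (TT.sm ζ S) = Φ ζ * S) ∧
      (∀ (x : E.X) (S : CP.O), Φ (td.mk2 x (pc.u S)) = CP.rep.t x * S) ∧
      Function.Injective Φ ∧
      Set.range Φ = clspan {z : CP.O | ∃ (x : E.X) (S : CP.O), z = CP.rep.t x * S} := by
  classical
  let e : CP.O ≃ OXc.X := Equiv.ofBijective pc.u pc.bij
  have he : ∀ S : CP.O, e.symm (pc.u S) = S := fun S => e.symm_apply_apply S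
  have he' : ∀ y : OXc.X, pc.u (e.symm y) = y := fun y => e.apply_symm_apply y
  -- the elementary maps
  let g1 : E.X × OXc.X → CP.O := fun p => CP.rep.t p.1 * e.symm p.2
  let g2 : E.X × OXc.X → TT.X := fun p => td.mk2 p.1 p.2
  let L : ((E.X × OXc.X) →₀ ℂ) →ₗ[ℂ] CP.O := Finsupp.linearCombination ℂ g1
  let M : ((E.X × OXc.X) →₀ ℂ) →ₗ[ℂ] TT.X := Finsupp.linearCombination ℂ g2
  -- the fundamental inner-product identity on elementary tensors
  have key_elem : ∀ p q : E.X × OXc.X,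
      star (g1 p) * g1 q = TT.ip (g2 p) (g2 q) := by
    rintro ⟨x, y⟩ ⟨x', y'⟩
    have hlhs : star (g1 (x, y)) * g1 (x', y')
        = star (e.symm y) * (CP.rep.π (E.ip x x') * e.symm y') := by
      show star (CP.rep.t x * e.symm y) * (CP.rep.t x' * e.symm y') = _
      rw [star_mul]
      calc star (e.symm y) * star (CP.rep.t x) * (CP.rep.t x' * e.symm y')
          = star (e.symm y) * ((star (CP.rep.t x) * CP.rep.t x') * e.symm y') := by simp only [mul_assoc]
        _ = star (e.symm y) * (CP.rep.π (E.ip x x') * e.symm y') := by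
            rw [CP.rep.t_mul]
    rw [hlhs]
    show _ = TT.ip (td.mk2 x y) (td.mk2 x' y')
    rw [td.ip_mk]
    conv_rhs => rw [← he' y, ← he' y']
    rw [pc.la, pc.ip]
  -- sesquilinear extension to finitely supported combinations
  have key_single : ∀ (q : E.X × OXc.X) (f : (E.X × OXc.X) →₀ ℂ),
      star (L f) * g1 q = TT.ip (M f) (g2 q) := by
    intro q f
    induction f using Finsupp.induction_linear with
    | zero => simp [L, M, CorrAux.ip_zero_left]
    | add f g hf hg =>
        rw [map_add, map_add, star_add, add_mul, hf, hg, CorrAux.ip_add_left]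
    | single p c =>
        rw [Finsupp.linearCombination_single, Finsupp.linearCombination_single,
          star_smul, smul_mul_assoc, CorrAux.ip_smul_left, key_elem p q]
        rfl
  have key : ∀ f g : (E.X × OXc.X) →₀ ℂ,
      star (L f) * L g = TT.ip (M f) (M g) := by
    intro f g
    induction g using Finsupp.induction_linear with
    | zero => simp [L, M, CorrAux.ip_zero_right]
    | add g1' g2' h1 h2 =>
        rw [map_add, map_add, mul_add, h1, h2, TT.ip_add]
    | single q c =>
        rw [Finsupp.linearCombination_single, Finsupp.linearCombination_single,
          mul_smul_comm, TT.ip_smul, key_single q f]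
  -- the kernel of `M` is contained in the kernel of `L`
  have hker : ∀ f, M f = 0 → L f = 0 := by
    intro f hf
    have h1 : ‖L f‖ * ‖L f‖ = 0 := by
      rw [← CStarRing.norm_star_mul_self, key f f, hf, CorrAux.ip_zero_left, norm_zero]
    exact norm_eq_zero.mp (mul_self_eq_zero.mp h1)
  -- the linear map on the algebraic span
  let V : Submodule ℂ TT.X := LinearMap.range M
  have hVspan : V = Submodule.span ℂ (Set.range g2) := Finsupp.range_linearCombination (R := ℂ) (v := g2)
  have hle : LinearMap.ker M ≤ LinearMap.ker L :=
    fun f hf => LinearMap.mem_ker.mpr (hker f (LinearMap.mem_ker.mp hf))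
  let Φ0 : V →ₗ[ℂ] CP.O :=
    ((LinearMap.ker M).liftQ L hle).comp
      (M.quotKerEquivRange.symm : (LinearMap.range M) →ₗ[ℂ] _)
  have hΦ0 : ∀ (f : (E.X × OXc.X) →₀ ℂ) (h : M f ∈ LinearMap.range M),
      Φ0 ⟨M f, h⟩ = L f := by
    intro f h
    show ((LinearMap.ker M).liftQ L hle) (M.quotKerEquivRange.symm ⟨M f, h⟩) = L f
    rw [LinearMap.quotKerEquivRange_symm_apply_image]
    exact Submodule.liftQ_apply _ _ _
  have hipV : ∀ v w : V, star (Φ0 v) * Φ0 w = TT.ip (v : TT.X) (w : TT.X) := by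
    rintro ⟨v, hv⟩ ⟨w, hw⟩
    obtain ⟨f, rfl⟩ := hv
    obtain ⟨g, rfl⟩ := hw
    rw [hΦ0 f (LinearMap.mem_range_self M f), hΦ0 g (LinearMap.mem_range_self M g)]
    exact key f g
  have hnorm0 : ∀ v : V, ‖Φ0 v‖ = ‖(v : TT.X)‖ := by
    intro v
    have h1 : ‖Φ0 v‖ * ‖Φ0 v‖ = ‖(v : TT.X)‖ * ‖(v : TT.X)‖ := by
      rw [← CStarRing.norm_star_mul_self, hipV v v, ← TT.ip_norm, sq]
    exact (mul_self_inj_of_nonneg (norm_nonneg _) (norm_nonneg _)).mp h1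
  let Φ0c : V →L[ℂ] CP.O :=
    Φ0.mkContinuous 1 (fun v => by rw [one_mul, hnorm0 v]; rfl)
  -- density of `V`
  have hclV : closure (V : Set TT.X) = Set.univ := by
    have h1 : (V : Set TT.X)
        = ((Submodule.span ℂ (Set.range g2) : Submodule ℂ TT.X) : Set TT.X) := by
      rw [hVspan]
    rw [h1]
    exact td.dense
  have hdense : DenseRange (V.subtypeL) := by
    show Dense (Set.range V.subtypeL)
    have h1 : Set.range (V.subtypeL : V → TT.X) = (V : Set TT.X) := Subtype.range_val
    rw [dense_iff_closure_eq, h1, hclV]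
  -- the extension
  let Φc : TT.X →L[ℂ] CP.O :=
    Φ0c.extend V.subtypeL
  have hΦV : ∀ (ζ : TT.X) (h : ζ ∈ V), Φc ζ = Φ0 ⟨ζ, h⟩ := by
    intro ζ h
    exact ContinuousLinearMap.extend_eq (f := Φ0c) (e := V.subtypeL) hdense
      isUniformEmbedding_subtype_val.isUniformInducing ⟨ζ, h⟩
  -- value on elementary tensors
  have hΦ_elem : ∀ (x : E.X) (y : OXc.X), Φc (td.mk2 x y) = CP.rep.t x * e.symm y := by
    intro x y
    have hm1 : M (Finsupp.single (x, y) 1) = td.mk2 x y := by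
      simp [M, g2]
    have hm : td.mk2 x y ∈ V := ⟨Finsupp.single (x, y) 1, hm1⟩
    rw [hΦV _ hm]
    have h2 : (⟨td.mk2 x y, hm⟩ : V)
        = ⟨M (Finsupp.single (x, y) 1), LinearMap.mem_range_self M _⟩ :=
      Subtype.ext hm1.symm
    rw [h2, hΦ0]
    simp [L, g1]
  -- extension principle from the dense subspace `V`
  have dense_ext : ∀ {C : Set TT.X}, IsClosed C → ((V : Set TT.X) ⊆ C) → ∀ ζ, ζ ∈ C := by
    intro C hC hsub ζ
    have h1 : closure (V : Set TT.X) ⊆ C := closure_minimal hsub hC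
    exact h1 (by rw [hclV]; exact Set.mem_univ ζ)
  -- the inner-product identity
  have hipP : ∀ ζ η : TT.X, star (Φc ζ) * Φc η = TT.ip ζ η := by
    have step1 : ∀ ζ : TT.X, ζ ∈ V → ∀ η : TT.X, star (Φc ζ) * Φc η = TT.ip ζ η := by
      intro ζ hζ
      have hC : IsClosed {η : TT.X | star (Φc ζ) * Φc η = TT.ip ζ η} :=
        isClosed_eq ((continuous_mul_left _).comp Φc.continuous)
          (CorrAux.continuous_ip_right TT ζ)
      refine dense_ext hC ?_
      intro η hη
      show star (Φc ζ) * Φc η = TT.ip ζ η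
      rw [hΦV ζ hζ, hΦV η hη]
      exact hipV ⟨ζ, hζ⟩ ⟨η, hη⟩
    intro ζ η
    have hC : IsClosed {ζ' : TT.X | star (Φc ζ') * Φc η = TT.ip ζ' η} :=
      isClosed_eq ((continuous_mul_right _).comp (continuous_star.comp Φc.continuous))
        (CorrAux.continuous_ip_left TT η)
    exact dense_ext hC (fun ζ' hζ' => step1 ζ' hζ' η) ζ
  -- compatibility with the left action
  have hla : ∀ (a : A) (ζ : TT.X), Φc (TT.la a ζ) = CP.rep.π a * Φc ζ := by
    intro a ζ
    have hC : IsClosed {ζ : TT.X | Φc (TT.la a ζ) = CP.rep.π a * Φc ζ} :=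
      isClosed_eq (Φc.continuous.comp (CorrAux.continuous_la TT a))
        ((continuous_mul_left _).comp Φc.continuous)
    refine dense_ext hC ?_ ζ
    intro w hw
    rw [SetLike.mem_coe, hVspan] at hw
    induction hw using Submodule.span_induction with
    | mem w hw =>
        obtain ⟨⟨x, y⟩, rfl⟩ := hw
        show Φc (TT.la a (td.mk2 x y)) = CP.rep.π a * Φc (td.mk2 x y)
        rw [td.la_mk, hΦ_elem, hΦ_elem, ← mul_assoc, CP.rep.mul_t]
    | zero =>
        show Φc (TT.la a 0) = CP.rep.π a * Φc 0
        rw [CorrAux.la_zero, map_zero, mul_zero]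
    | add x y hx hy hx' hy' =>
        show Φc (TT.la a (x + y)) = CP.rep.π a * Φc (x + y)
        rw [TT.la_add, map_add, map_add, mul_add]
        rw [show Φc (TT.la a x) = CP.rep.π a * Φc x from hx',
          show Φc (TT.la a y) = CP.rep.π a * Φc y from hy']
    | smul c x hx hx' =>
        show Φc (TT.la a (c • x)) = CP.rep.π a * Φc (c • x)
        rw [TT.la_smul, map_smul, map_smul,
          show Φc (TT.la a x) = CP.rep.π a * Φc x from hx', mul_smul_comm]
  -- compatibility with the right action
  have hsm : ∀ (ζ : TT.X) (S : CP.O), Φc (TT.sm ζ S) = Φc ζ * S := by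
    intro ζ S
    have hC : IsClosed {ζ : TT.X | Φc (TT.sm ζ S) = Φc ζ * S} :=
      isClosed_eq (Φc.continuous.comp (CorrAux.continuous_sm_left TT S))
        ((continuous_mul_right _).comp Φc.continuous)
    refine dense_ext hC ?_ ζ
    intro w hw
    rw [SetLike.mem_coe, hVspan] at hw
    induction hw using Submodule.span_induction with
    | mem w hw =>
        obtain ⟨⟨x, y⟩, rfl⟩ := hw
        show Φc (TT.sm (td.mk2 x y) S) = Φc (td.mk2 x y) * S
        rw [td.sm_mk, hΦ_elem, hΦ_elem]
        conv_lhs => rw [← he' y]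
        rw [pc.sm, he]
        exact (mul_assoc _ _ _).symm
    | zero =>
        show Φc (TT.sm 0 S) = Φc 0 * S
        rw [CorrAux.sm_zero_left, map_zero, zero_mul]
    | add x y hx hy hx' hy' =>
        show Φc (TT.sm (x + y) S) = Φc (x + y) * S
        rw [TT.sm_add, map_add, map_add, add_mul,
          show Φc (TT.sm x S) = Φc x * S from hx',
          show Φc (TT.sm y S) = Φc y * S from hy']
    | smul c x hx hx' =>
        show Φc (TT.sm (c • x) S) = Φc (c • x) * S
        rw [TT.sm_smul, map_smul, map_smul,
          show Φc (TT.sm x S) = Φc x * S from hx', smul_mul_assoc]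
  -- value on elementary tensors, in the stated form
  have hmk : ∀ (x : E.X) (S : CP.O), Φc (td.mk2 x (pc.u S)) = CP.rep.t x * S := by
    intro x S
    rw [hΦ_elem, he]
  -- `Φc` is isometric, hence injective with closed range
  have hnorm : ∀ ζ : TT.X, ‖Φc ζ‖ = ‖ζ‖ := by
    intro ζ
    have h1 : ‖Φc ζ‖ * ‖Φc ζ‖ = ‖ζ‖ * ‖ζ‖ := by
      rw [← CStarRing.norm_star_mul_self, hipP ζ ζ, ← TT.ip_norm, sq]
    exact (mul_self_inj_of_nonneg (norm_nonneg _) (norm_nonneg _)).mp h1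
  have hinj : Function.Injective ⇑Φc := by
    intro ζ η h
    have h1 : ‖ζ - η‖ = 0 := by rw [← hnorm, map_sub, h, sub_self, norm_zero]
    exact sub_eq_zero.mp (norm_eq_zero.mp h1)
  have hiso : Isometry ⇑Φc := AddMonoidHomClass.isometry_of_norm Φc hnorm
  have hrancl : IsClosed (Set.range ⇑Φc) := hiso.isClosedEmbedding.isClosed_range
  -- identification of the range
  have hrange : Set.range ⇑Φc
      = clspan {z : CP.O | ∃ (x : E.X) (S : CP.O), z = CP.rep.t x * S} := by
    apply Set.Subset.antisymm
    · rintro _ ⟨ζ, rfl⟩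
      have himg : Φc '' (V : Set TT.X)
          ⊆ ((Submodule.span ℂ {z : CP.O | ∃ (x : E.X) (S : CP.O), z = CP.rep.t x * S} :
              Submodule ℂ CP.O) : Set CP.O) := by
        rintro _ ⟨w, hw, rfl⟩
        rw [SetLike.mem_coe, hVspan] at hw
        induction hw using Submodule.span_induction with
        | mem w hw =>
            obtain ⟨⟨x, y⟩, rfl⟩ := hw
            show Φc (td.mk2 x y) ∈ _
            rw [hΦ_elem]
            exact Submodule.subset_span ⟨x, e.symm y, rfl⟩
        | zero =>
            show Φc 0 ∈ _
            rw [map_zero]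
            exact Submodule.zero_mem _
        | add x y hx hy hx' hy' =>
            show Φc (x + y) ∈ _
            rw [map_add]
            exact Submodule.add_mem _ hx' hy'
        | smul c x hx hx' =>
            show Φc (c • x) ∈ _
            rw [map_smul]
            exact Submodule.smul_mem _ _ hx'
      have hζcl : ζ ∈ closure (V : Set TT.X) := by rw [hclV]; exact Set.mem_univ ζ
      have h2 : Φc ζ ∈ closure (Φc '' (V : Set TT.X)) :=
        image_closure_subset_closure_image Φc.continuous ⟨ζ, hζcl, rfl⟩
      exact closure_mono himg h2
    · show closure _ ⊆ _
      refine closure_minimal ?_ hrancl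
      intro z hz
      rw [SetLike.mem_coe] at hz
      induction hz using Submodule.span_induction with
      | mem z hz =>
          obtain ⟨x, S, rfl⟩ := hz
          exact ⟨td.mk2 x (pc.u S), hmk x S⟩
      | zero => exact ⟨0, map_zero Φc⟩
      | add x y hx hy hx' hy' =>
          obtain ⟨u1, rfl⟩ := hx'
          obtain ⟨u2, rfl⟩ := hy'
          exact ⟨u1 + u2, map_add Φc u1 u2⟩
      | smul c x hx hx' =>
          obtain ⟨u1, rfl⟩ := hx'
          exact ⟨c • u1, map_smul Φc c u1⟩
  exact ⟨⇑Φc, fun ζ η => map_add Φc ζ η, fun c ζ => map_smul Φc c ζ, hipP, hla, hsm, hmk,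
    hinj, hrange⟩

end
end
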